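/- arXiv:math/0607451 — 4 statements merged into one kernel-verified Lean document; each statement's English description precedes it below -/
import Mathlib

section
/- For a partition λ with β-numbers β_1 > β_2 > ⋯ (with charge 0), increasing a single β-number β_i by h (when β_i + h is not already a β-number) yields the set of β-numbers of a partition μ obtained from λ by adding a rim hook of length h; conversely every way of wrapping an h-rim hook onto λ arises this way. -/
noncomputable section

/-- A partition: a weakly decreasing sequence of natural numbers with finite support.
Rows and columns are indexed from `0`. -/
structure Partition' where
  parts : ℕ → ℕ
  antitone : ∀ ⦃i j : ℕ⦄, i ≤ j → parts j ≤ parts i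
  finite_support : ∃ N, ∀ i, N ≤ i → parts i = 0

namespace Partition'

/-- The Young diagram of a partition: cells `(i, j)` with `j < λ_i` (0-indexed). -/
def cells (p : Partition') : Set (ℕ × ℕ) := {x | x.2 < p.parts x.1}

/-- The size `|λ|` of a partition. -/
def size (p : Partition') : ℕ := p.cells.ncard

/-- Two cells are adjacent if they share an edge. -/
def adjacent (a b : ℕ × ℕ) : Prop :=
  (a.1 = b.1 ∧ (a.2 + 1 = b.2 ∨ b.2 + 1 = a.2)) ∨
  (a.2 = b.2 ∧ (a.1 + 1 = b.1 ∨ b.1 + 1 = a.1))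

/-- A set of cells is (edge-)connected. -/
def ConnectedSet (S : Set (ℕ × ℕ)) : Prop :=
  ∀ a ∈ S, ∀ b ∈ S, ∃ (n : ℕ) (f : ℕ → ℕ × ℕ),
    f 0 = a ∧ f n = b ∧ (∀ k < n, adjacent (f k) (f (k + 1))) ∧ (∀ k ≤ n, f k ∈ S)

/-- A set of cells contains no 2×2 square. -/
def No2x2 (S : Set (ℕ × ℕ)) : Prop :=
  ∀ i j : ℕ, ¬ ((i, j) ∈ S ∧ (i + 1, j) ∈ S ∧ (i, j + 1) ∈ S ∧ (i + 1, j + 1) ∈ S)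

/-- `AddRimHook p q h` : the partition `q` is obtained from `p` by wrapping on
(a connected skew shape of size `h` containing no 2×2 square, i.e.) a rim hook of length `h`. -/
def AddRimHook (p q : Partition') (h : ℕ) : Prop :=
  p.cells ⊆ q.cells ∧ (q.cells \ p.cells).ncard = h ∧
    ConnectedSet (q.cells \ p.cells) ∧ No2x2 (q.cells \ p.cells)

/-- The length `λ'_j` of column `j` (0-indexed) of a partition. -/
def colLen (p : Partition') (j : ℕ) : ℕ := {i : ℕ | (i, j) ∈ p.cells}.ncard

/-- The rim hook `r^λ_x` attached to the node `x = (i,j)` of `λ`. -/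
def rimHook (p : Partition') (i j : ℕ) : Set (ℕ × ℕ) :=
  {y ∈ p.cells | i ≤ y.1 ∧ j ≤ y.2 ∧ (y.1 + 1, y.2 + 1) ∉ p.cells}

/-- The leg length of the rim hook `r^λ_{(i,j)}`. -/
def legLength (p : Partition') (i j : ℕ) : ℕ := p.colLen j - 1 - i

/-- The hook length `h^λ_{(i,j)}` of the node `(i,j) ∈ [λ]` (0-indexed). -/
def hookLen (p : Partition') (i j : ℕ) : ℕ := p.parts i + p.colLen j - i - j - 1

/-- The residue mod `e` of the foot node of a rim hook `r^λ_{(i,j)}`; the foot node is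
`(λ'_j - 1, j)` (0-indexed), so its residue is `j - λ'_j + 1 = (j+1) - λ'_j` mod `e`. -/
def footRes (e : ℕ) (p : Partition') (j : ℕ) : ZMod e :=
  (((j : ℤ) + 1 - p.colLen j : ℤ) : ZMod e)

/-- `C_f(λ)` : the number of nodes of `λ` with residue `f` mod `e`, using charge `c`
(the residue of node `(i,j)` (0-indexed) is `j - i + c` mod `e`). -/
def resCount (e : ℕ) (c : ℤ) (p : Partition') (f : ZMod e) : ℕ :=
  {x ∈ p.cells | (((x.2 : ℤ) - x.1 + c : ℤ) : ZMod e) = f}.ncard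

/-- The set of β-numbers of `p` with charge `c` : `β_i = λ_i - i + c` (1-indexed rows). -/
def betaSet (p : Partition') (c : ℤ) : Set ℤ :=
  {z | ∃ i : ℕ, z = (p.parts i : ℤ) - (i + 1) + c}

/-- The dominance order on partitions. -/
def Dominates (p q : Partition') : Prop :=
  ∀ m : ℕ, ∑ i ∈ Finset.range m, q.parts i ≤ ∑ i ∈ Finset.range m, p.parts i

end Partition'


namespace RimHookAux
open Partition'

def beta (p : Partition') (i : ℕ) : ℤ := (p.parts i : ℤ) - (i + 1)

lemma beta_strictAnti (p : Partition') : StrictAnti (beta p) := by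
  apply strictAnti_nat_of_succ_lt
  intro n
  have := p.antitone (show n ≤ n+1 by omega)
  unfold beta
  push_cast
  omega

lemma betaSet_eq (p : Partition') : p.betaSet 0 = Set.range (beta p) := by
  ext z
  constructor
  · rintro ⟨i, hi⟩; exact ⟨i, by rw [hi]; unfold beta; push_cast; ring⟩
  · rintro ⟨i, hi⟩; exact ⟨i, by rw [← hi]; unfold beta; push_cast; ring⟩

lemma strictAnti_range_eq {f g : ℕ → ℤ} (hf : StrictAnti f) (hg : StrictAnti g)
    (h : Set.range f = Set.range g) : f = g := by
  funext i
  induction i using Nat.strong_induction_on with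
  | _ i ih =>
    obtain ⟨k, hk⟩ : f i ∈ Set.range g := h ▸ Set.mem_range_self i
    obtain ⟨l, hl⟩ : g i ∈ Set.range f := h.symm ▸ Set.mem_range_self i
    have h1 : f i ≤ g i := by
      rcases lt_or_ge k i with hki | hki
      · exfalso
        have hgk : g k = f k := (ih k hki).symm
        have hfk : f k = f i := by rw [← hgk, hk]
        exact absurd (hf.injective hfk) (by omega)
      · rw [← hk]; exact hg.antitone hki
    have h2 : g i ≤ f i := by
      rcases lt_or_ge l i with hli | hli
      · exfalso
        have hfl : f l = g l := ih l hli
        have hgl : g l = g i := by rw [← hfl, hl]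
        exact absurd (hg.injective hgl) (by omega)
      · rw [← hl]; exact hf.antitone hli
    omega

lemma eq_of_betaSet_eq {p q : Partition'} (h : p.betaSet 0 = q.betaSet 0) : p = q := by
  have hb : beta p = beta q :=
    strictAnti_range_eq (beta_strictAnti p) (beta_strictAnti q)
      (by rw [← betaSet_eq, ← betaSet_eq, h])
  have hp : p.parts = q.parts := by
    funext i
    have := congrFun hb i
    unfold beta at this
    omega
  cases p; cases q; simp_all

lemma mem_cells {p : Partition'} {x : ℕ × ℕ} : x ∈ p.cells ↔ x.2 < p.parts x.1 := Iff.rfl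

lemma cells_finite (p : Partition') : p.cells.Finite := by
  obtain ⟨N, hN⟩ := p.finite_support
  apply Set.Finite.subset ((Set.finite_Iio N).prod (Set.finite_Iio (p.parts 0)))
  rintro ⟨i, j⟩ hij
  have h1 : j < p.parts i := hij
  have h2 : p.parts i ≤ p.parts 0 := p.antitone (Nat.zero_le i)
  constructor
  · by_contra hc
    simp only [Set.mem_Iio, not_lt] at hc
    rw [hN i hc] at h1; omega
  · exact Set.mem_Iio.2 (by omega)

end RimHookAux

namespace RimHookAux
open Partition'

/-- Explicit description of adding a rim hook occupying rows `a` to `c`. -/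
structure RHP (p q : Partition') (a c : ℕ) : Prop where
  hac : a ≤ c
  lt_a : p.parts a < q.parts a
  eq_lt : ∀ i, i < a → q.parts i = p.parts i
  eq_gt : ∀ i, c < i → q.parts i = p.parts i
  eq_mid : ∀ i, a < i → i ≤ c → q.parts i = p.parts (i - 1) + 1

lemma RHP.parts_le {p q : Partition'} {a c : ℕ} (h : RHP p q a c) (i : ℕ) :
    p.parts i ≤ q.parts i := by
  rcases lt_trichotomy i a with hi | hi | hi
  · rw [h.eq_lt i hi]
  · subst hi; exact h.lt_a.le
  · rcases le_or_gt i c with hc | hc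
    · rw [h.eq_mid i hi hc]
      have := p.antitone (show i - 1 ≤ i by omega)
      omega
    · rw [h.eq_gt i hc]

lemma RHP.subset {p q : Partition'} {a c : ℕ} (h : RHP p q a c) :
    p.cells ⊆ q.cells := by
  rintro ⟨i, j⟩ hij
  exact lt_of_lt_of_le hij (h.parts_le i)

lemma RHP.mem_diff {p q : Partition'} {a c : ℕ} (h : RHP p q a c) {i j : ℕ} :
    (i, j) ∈ q.cells \ p.cells ↔ p.parts i ≤ j ∧ j < q.parts i := by
  simp only [Set.mem_diff, mem_cells]
  omega

lemma RHP.row_mem {p q : Partition'} {a c : ℕ} (h : RHP p q a c) {i j : ℕ}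
    (hij : (i, j) ∈ q.cells \ p.cells) : a ≤ i ∧ i ≤ c := by
  rw [h.mem_diff] at hij
  by_contra hcon
  have : q.parts i = p.parts i := by
    rcases Nat.lt_or_ge i a with hi | hi
    · exact h.eq_lt i hi
    · exact h.eq_gt i (by omega)
  omega

lemma RHP.parts_lt {p q : Partition'} {a c : ℕ} (h : RHP p q a c) {i : ℕ}
    (h1 : a ≤ i) (h2 : i ≤ c) : p.parts i < q.parts i := by
  rcases Nat.eq_or_lt_of_le h1 with rfl | hi
  · exact h.lt_a
  · rw [h.eq_mid i hi h2]
    have := p.antitone (show i - 1 ≤ i by omega)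
    omega

/-- The difference set as a finset. -/
def diffFinset (p q : Partition') (a c : ℕ) : Finset (ℕ × ℕ) :=
  (Finset.Icc a c).biUnion fun i =>
    (Finset.Ico (p.parts i) (q.parts i)).image fun j => (i, j)

lemma RHP.diff_eq {p q : Partition'} {a c : ℕ} (h : RHP p q a c) :
    q.cells \ p.cells = ↑(diffFinset p q a c) := by
  ext ⟨i, j⟩
  simp only [diffFinset, Finset.coe_biUnion, Set.mem_iUnion, Finset.mem_coe,
    Finset.mem_image, Finset.mem_Ico, Finset.mem_Icc, h.mem_diff]
  constructor
  · intro hij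
    have hrow := h.row_mem (h.mem_diff.2 hij)
    exact ⟨i, hrow, j, hij, rfl⟩
  · rintro ⟨i', hi', j', hj', heq⟩
    obtain ⟨rfl, rfl⟩ := Prod.mk.inj heq
    exact hj'

lemma RHP.card_diff {p q : Partition'} {a c : ℕ} (h : RHP p q a c) :
    (q.cells \ p.cells).ncard = q.parts a + c - p.parts c - a := by
  rw [h.diff_eq, Set.ncard_coe_finset]
  simp only [diffFinset]
  rw [Finset.card_biUnion]
  · have hinj : ∀ i : ℕ, Function.Injective (fun j => ((i, j) : ℕ × ℕ)) :=
      fun i x y hxy => by simpa using hxy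
    simp only [Finset.card_image_of_injective _ (hinj _)]
    have hsum : ∀ d, a + d ≤ c →
        ∑ i ∈ Finset.Icc a (a + d), (Finset.Ico (p.parts i) (q.parts i)).card
          = q.parts a + (a + d) - p.parts (a + d) - a := by
      intro d
      induction d with
      | zero =>
        intro _
        simp [Nat.card_Ico]
        have := h.lt_a
        omega
      | succ d ih =>
        intro hd
        rw [show a + (d + 1) = (a + d) + 1 by omega,
          Finset.sum_Icc_succ_top (by omega : a ≤ a + d + 1)]
        rw [show (a + d) + 1 = a + d + 1 by rfl] at *
        rw [ih (by omega)]
        have h1 : q.parts (a + d + 1) = p.parts (a + d) + 1 :=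
          h.eq_mid _ (by omega) (by omega)
        have h2 : p.parts a + 1 ≤ q.parts a := h.lt_a
        have h3 : p.parts (a + d) ≤ p.parts a := p.antitone (by omega)
        have h4 : p.parts (a + d + 1) ≤ p.parts (a + d) := p.antitone (by omega)
        rw [Nat.card_Ico, h1]
        omega
    obtain ⟨d, rfl⟩ : ∃ d, c = a + d := ⟨c - a, by have := h.hac; omega⟩
    rw [hsum d (le_refl _)]
  · intro x _ y _ hxy
    apply Finset.disjoint_left.2
    rintro ⟨i, j⟩ hi hj
    simp only [Finset.mem_image, Finset.mem_Ico] at hi hj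
    obtain ⟨j1, _, h1⟩ := hi
    obtain ⟨j2, _, h2⟩ := hj
    apply hxy
    have e1 := Prod.mk.inj h1
    have e2 := Prod.mk.inj h2
    omega

end RimHookAux

namespace RimHookAux
open Partition'

def Reach (S : Set (ℕ × ℕ)) (x y : ℕ × ℕ) : Prop :=
  ∃ (n : ℕ) (f : ℕ → ℕ × ℕ),
    f 0 = x ∧ f n = y ∧ (∀ k < n, adjacent (f k) (f (k + 1))) ∧ (∀ k ≤ n, f k ∈ S)

lemma adjacent_symm {x y : ℕ × ℕ} (h : adjacent x y) : adjacent y x := by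
  unfold adjacent at *
  tauto

lemma reach_refl {S : Set (ℕ × ℕ)} {x : ℕ × ℕ} (hx : x ∈ S) : Reach S x x :=
  ⟨0, fun _ => x, rfl, rfl, fun k hk => by omega, fun k _ => hx⟩

lemma reach_adj {S : Set (ℕ × ℕ)} {x y : ℕ × ℕ} (h : adjacent x y)
    (hx : x ∈ S) (hy : y ∈ S) : Reach S x y := by
  refine ⟨1, fun k => if k = 0 then x else y, by simp, by simp, ?_, ?_⟩
  · intro k hk
    have : k = 0 := by omega
    subst this; simpa using h
  · intro k _
    by_cases hk : k = 0 <;> simp [hk, hx, hy]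

lemma reach_trans {S : Set (ℕ × ℕ)} {x y z : ℕ × ℕ}
    (h1 : Reach S x y) (h2 : Reach S y z) : Reach S x z := by
  obtain ⟨n, f, hf0, hfn, hfa, hfm⟩ := h1
  obtain ⟨m, g, hg0, hgm, hga, hgmem⟩ := h2
  refine ⟨n + m, fun k => if k < n then f k else g (k - n), ?_, ?_, ?_, ?_⟩
  · by_cases hn : 0 < n
    · simp only [if_pos hn]; exact hf0
    · simp only [if_neg hn]
      have hn0 : n = 0 := by omega
      subst hn0
      rw [show (0 : ℕ) - 0 = 0 by rfl, hg0, ← hfn, hf0]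
  · simp only [if_neg (show ¬ (n + m < n) by omega)]
    rw [show n + m - n = m by omega]
    exact hgm
  · intro k hk
    rcases Nat.lt_or_ge (k + 1) n with h | h
    · simp only [show k < n by omega, if_pos, h, if_pos]
      exact hfa k (by omega)
    · rcases Nat.lt_or_ge k n with h' | h'
      · -- k = n - 1, k + 1 = n
        have hkn : k + 1 = n := by omega
        simp only [if_pos h', if_neg (show ¬ (k + 1 < n) by omega)]
        rw [show k + 1 - n = 0 by omega, hg0, ← hfn, ← hkn]
        exact hfa k (by omega)
      · simp only [if_neg (show ¬ (k < n) by omega),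
          if_neg (show ¬ (k + 1 < n) by omega)]
        rw [show k + 1 - n = (k - n) + 1 by omega]
        exact hga (k - n) (by omega)
  · intro k hk
    rcases Nat.lt_or_ge k n with h | h
    · simp only [if_pos h]
      exact hfm k (by omega)
    · simp only [if_neg (show ¬ (k < n) by omega)]
      exact hgmem (k - n) (by omega)

lemma reach_symm {S : Set (ℕ × ℕ)} {x y : ℕ × ℕ} (h : Reach S x y) : Reach S y x := by
  obtain ⟨n, f, hf0, hfn, hfa, hfm⟩ := h
  refine ⟨n, fun k => f (n - k), by simpa, by simpa, ?_, ?_⟩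
  · intro k hk
    show adjacent (f (n - k)) (f (n - (k + 1)))
    have e1 : n - k = (n - (k + 1)) + 1 := by omega
    rw [e1]
    exact adjacent_symm (hfa (n - (k + 1)) (by omega))
  · intro k _
    exact hfm (n - k) (by omega)

lemma reach_row {S : Set (ℕ × ℕ)} {i lo hi : ℕ} (hS : ∀ j, lo ≤ j → j < hi → (i, j) ∈ S)
    {j j' : ℕ} (h1 : lo ≤ j) (h2 : j ≤ j') (h3 : j' < hi) : Reach S (i, j) (i, j') := by
  obtain ⟨d, rfl⟩ : ∃ d, j' = j + d := ⟨j' - j, by omega⟩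
  clear h2
  induction d with
  | zero => exact reach_refl (hS j h1 (by omega))
  | succ d ih =>
    refine reach_trans (ih (by omega)) (reach_adj ?_ ?_ ?_)
    · left; exact ⟨rfl, Or.inl (by omega)⟩
    · exact hS _ (by omega) (by omega)
    · exact hS _ (by omega) (by omega)

lemma RHP.mem_diff_left {p q : Partition'} {a c : ℕ} (h : RHP p q a c) {i : ℕ}
    (h1 : a ≤ i) (h2 : i ≤ c) : (i, p.parts i) ∈ q.cells \ p.cells :=
  h.mem_diff.2 ⟨le_refl _, h.parts_lt h1 h2⟩

lemma RHP.reach_anchor {p q : Partition'} {a c : ℕ} (h : RHP p q a c) :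
    ∀ d i, a ≤ i → i + d = c → Reach (q.cells \ p.cells) (i, p.parts i) (c, p.parts c) := by
  intro d
  induction d with
  | zero =>
    intro i hi hic
    rw [show i = c by omega]
    exact reach_refl (h.mem_diff_left h.hac (le_refl _))
  | succ d ih =>
    intro i hi hic
    have hic' : i < c := by omega
    have hmem1 : (i, p.parts i) ∈ q.cells \ p.cells := h.mem_diff_left hi (by omega)
    have hq : q.parts (i + 1) = p.parts i + 1 := h.eq_mid (i + 1) (by omega) (by omega)
    have hmem2 : (i + 1, p.parts i) ∈ q.cells \ p.cells :=
      h.mem_diff.2 ⟨p.antitone (by omega), by omega⟩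
    refine reach_trans (reach_adj ?_ hmem1 hmem2) ?_
    · right; exact ⟨rfl, Or.inl rfl⟩
    have hrow : ∀ j', p.parts (i + 1) ≤ j' → j' < q.parts (i + 1) →
        (i + 1, j') ∈ q.cells \ p.cells := fun j' hj1 hj2 => h.mem_diff.2 ⟨hj1, hj2⟩
    refine reach_trans (reach_symm (reach_row hrow (le_refl _) (p.antitone (by omega))
      (by omega))) ?_
    exact ih (i + 1) (by omega) (by omega)

lemma RHP.connected {p q : Partition'} {a c : ℕ} (h : RHP p q a c) :
    ConnectedSet (q.cells \ p.cells) := by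
  have key : ∀ x ∈ q.cells \ p.cells, Reach (q.cells \ p.cells) x (c, p.parts c) := by
    rintro ⟨i, j⟩ hx
    obtain ⟨hi1, hi2⟩ := h.row_mem hx
    obtain ⟨hj1, hj2⟩ := h.mem_diff.1 hx
    have hrow : ∀ j', p.parts i ≤ j' → j' < q.parts i →
        (i, j') ∈ q.cells \ p.cells := fun j' hj'1 hj'2 => h.mem_diff.2 ⟨hj'1, hj'2⟩
    refine reach_trans (reach_symm (reach_row hrow (le_refl _) hj1 hj2)) ?_
    exact h.reach_anchor (c - i) i hi1 (by omega)
  intro x hx y hy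
  exact reach_trans (key x hx) (reach_symm (key y hy))

lemma RHP.no2x2 {p q : Partition'} {a c : ℕ} (h : RHP p q a c) :
    No2x2 (q.cells \ p.cells) := by
  rintro i j ⟨h1, h2, h3, h4⟩
  obtain ⟨hi1, hi2⟩ := h.row_mem h1
  obtain ⟨hi1', hi2'⟩ := h.row_mem h2
  have hq : q.parts (i + 1) = p.parts i + 1 := h.eq_mid (i + 1) (by omega) (by omega)
  have ha := h.mem_diff.1 h1
  have hb := h.mem_diff.1 h4
  omega

lemma RHP.addRimHook {p q : Partition'} {a c : ℕ} (h : RHP p q a c) :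
    AddRimHook p q (q.parts a + c - p.parts c - a) :=
  ⟨h.subset, h.card_diff, h.connected, h.no2x2⟩

end RimHookAux

namespace RimHookAux
open Partition'

lemma nat_ivt {g : ℕ → ℕ} {n t : ℕ}
    (hstep : ∀ k < n, g (k + 1) ≤ g k + 1 ∧ g k ≤ g (k + 1) + 1)
    (h0 : g 0 ≤ t) (hn : t ≤ g n) : ∃ k ≤ n, g k = t := by
  induction n with
  | zero => exact ⟨0, le_refl _, by omega⟩
  | succ n ih =>
    by_cases hc : t ≤ g n
    · obtain ⟨k, hk1, hk2⟩ := ih (fun k hk => hstep k (by omega)) hc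
      exact ⟨k, by omega, hk2⟩
    · have := hstep n (by omega)
      exact ⟨n + 1, le_refl _, by omega⟩

lemma nat_cross {g : ℕ → ℕ} {n t : ℕ}
    (hstep : ∀ k < n, g (k + 1) ≤ g k + 1 ∧ g k ≤ g (k + 1) + 1)
    (h0 : g 0 < t) (hn : t ≤ g n) : ∃ k < n, g k + 1 = t ∧ g (k + 1) = t := by
  induction n with
  | zero => omega
  | succ n ih =>
    by_cases hc : t ≤ g n
    · obtain ⟨k, hk1, hk2⟩ := ih (fun k hk => hstep k (by omega)) hc
      exact ⟨k, by omega, hk2⟩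
    · have := hstep n (by omega)
      exact ⟨n, by omega, by omega, by omega⟩

lemma adjacent_step {x y : ℕ × ℕ} (h : Partition'.adjacent x y) :
    y.1 ≤ x.1 + 1 ∧ x.1 ≤ y.1 + 1 := by
  rcases h with ⟨h1, _⟩ | ⟨_, h2 | h2⟩ <;> omega

lemma addRimHook_RHP {p q : Partition'} {h : ℕ} (hh : 0 < h)
    (hr : AddRimHook p q h) : ∃ a c, RHP p q a c := by
  obtain ⟨hsub, hcard, hconn, h2x2⟩ := hr
  -- parts inequality
  have hle : ∀ i, p.parts i ≤ q.parts i := by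
    intro i
    by_contra hc
    have h1 : (i, q.parts i) ∈ p.cells := show q.parts i < p.parts i by omega
    have h2 : q.parts i < q.parts i := hsub h1
    omega
  have hdm : ∀ x : ℕ × ℕ, x ∈ q.cells \ p.cells ↔ p.parts x.1 ≤ x.2 ∧ x.2 < q.parts x.1 := by
    intro x
    simp only [Set.mem_diff, mem_cells]
    have := hle x.1
    omega
  -- nonempty
  have hne : (q.cells \ p.cells).Nonempty := by
    apply Set.nonempty_of_ncard_ne_zero
    omega
  obtain ⟨x0, hx0⟩ := hne
  have hR0 : p.parts x0.1 < q.parts x0.1 := by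
    have := (hdm x0).1 hx0
    omega
  -- bound on rows
  obtain ⟨N, hN⟩ := q.finite_support
  have hbound : ∀ i, p.parts i < q.parts i → i ≤ N := by
    intro i hi
    by_contra hc
    rw [hN i (by omega)] at hi
    omega
  have hex : ∃ i, p.parts i < q.parts i := ⟨x0.1, hR0⟩
  set a := Nat.find hex with ha
  have hRa : p.parts a < q.parts a := Nat.find_spec hex
  have hamin : ∀ i, i < a → ¬ p.parts i < q.parts i := fun i hi => Nat.find_min hex hi
  set c := Nat.findGreatest (fun i => p.parts i < q.parts i) N with hc
  have hRc : p.parts c < q.parts c :=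
    Nat.findGreatest_spec (P := fun i => p.parts i < q.parts i) (hbound x0.1 hR0) hR0
  have hcmax : ∀ i, c < i → ¬ p.parts i < q.parts i := by
    intro i hi
    by_cases hiN : i ≤ N
    · exact Nat.findGreatest_is_greatest (P := fun i => p.parts i < q.parts i) hi hiN
    · intro hcon
      exact absurd (hbound i hcon) (by omega)
  have hac : a ≤ c := by
    by_contra hcon
    exact hamin c (by omega) hRc
  -- every row between a and c is in R
  have hmid : ∀ i, a ≤ i → i ≤ c → p.parts i < q.parts i := by
    intro i hi1 hi2
    have hma : (a, p.parts a) ∈ q.cells \ p.cells := (hdm _).2 ⟨le_refl _, hRa⟩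
    have hmc : (c, p.parts c) ∈ q.cells \ p.cells := (hdm _).2 ⟨le_refl _, hRc⟩
    obtain ⟨n, f, hf0, hfn, hfa, hfm⟩ := hconn _ hma _ hmc
    have hstep : ∀ k < n, (f (k + 1)).1 ≤ (f k).1 + 1 ∧ (f k).1 ≤ (f (k + 1)).1 + 1 :=
      fun k hk => adjacent_step (hfa k hk)
    obtain ⟨k, hk1, hk2⟩ := nat_ivt (g := fun k => (f k).1) (t := i) hstep
      (show (f 0).1 ≤ i by rw [hf0]; exact hi1)
      (show i ≤ (f n).1 by rw [hfn]; exact hi2)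
    have hfk := (hdm _).1 (hfm k hk1)
    have hk2' : (f k).1 = i := hk2
    rw [hk2'] at hfk
    omega
  -- the crossing property
  have hcross : ∀ i, a < i → i ≤ c → p.parts (i - 1) < q.parts i := by
    intro i hi1 hi2
    have hm1 : (i - 1, p.parts (i - 1)) ∈ q.cells \ p.cells :=
      (hdm _).2 ⟨le_refl _, hmid (i - 1) (by omega) (by omega)⟩
    have hm2 : (i, p.parts i) ∈ q.cells \ p.cells :=
      (hdm _).2 ⟨le_refl _, hmid i (by omega) hi2⟩
    obtain ⟨n, f, hf0, hfn, hfa, hfm⟩ := hconn _ hm1 _ hm2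
    have hstep : ∀ k < n, (f (k + 1)).1 ≤ (f k).1 + 1 ∧ (f k).1 ≤ (f (k + 1)).1 + 1 :=
      fun k hk => adjacent_step (hfa k hk)
    obtain ⟨k, hk1, hk2, hk3⟩ := nat_cross (g := fun k => (f k).1) (t := i) hstep
      (show (f 0).1 < i by rw [hf0]; show i - 1 < i; omega)
      (show i ≤ (f n).1 by rw [hfn])
    have hk2' : (f k).1 + 1 = i := hk2
    have hk3' : (f (k + 1)).1 = i := hk3
    have hadj := hfa k hk1
    have hcol : (f k).2 = (f (k + 1)).2 := by
      rcases hadj with ⟨h1, _⟩ | ⟨h1, _⟩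
      · omega
      · exact h1
    have hu := (hdm _).1 (hfm k (by omega))
    have hv := (hdm _).1 (hfm (k + 1) (by omega))
    have e1 : (f k).1 = i - 1 := by omega
    rw [e1] at hu
    rw [hk3'] at hv
    omega
  -- the no-2x2 property
  have hupper : ∀ i, a < i → i ≤ c → q.parts i ≤ p.parts (i - 1) + 1 := by
    intro i hi1 hi2
    by_contra hcon
    have hqanti : q.parts i ≤ q.parts (i - 1) := q.antitone (by omega)
    have hpanti : p.parts i ≤ p.parts (i - 1) := p.antitone (by omega)
    apply h2x2 (i - 1) (p.parts (i - 1))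
    rw [show i - 1 + 1 = i by omega]
    refine ⟨(hdm _).2 ⟨?_, ?_⟩, (hdm _).2 ⟨?_, ?_⟩, (hdm _).2 ⟨?_, ?_⟩, (hdm _).2 ⟨?_, ?_⟩⟩ <;>
      simp only [Prod.fst, Prod.snd] <;> omega
  refine ⟨a, c, hac, hRa, ?_, ?_, ?_⟩
  · intro i hi
    have h1 := hamin i hi
    have := hle i
    omega
  · intro i hi
    have h1 := hcmax i hi
    have := hle i
    omega
  · intro i hi1 hi2
    have h1 := hcross i hi1 hi2
    have h2 := hupper i hi1 hi2
    omega

end RimHookAux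

namespace RimHookAux
open Partition'

lemma RHP.beta_lt {p q : Partition'} {a c : ℕ} (h : RHP p q a c) {i : ℕ} (hi : i < a) :
    beta q i = beta p i := by
  unfold beta; rw [h.eq_lt i hi]

lemma RHP.beta_gt {p q : Partition'} {a c : ℕ} (h : RHP p q a c) {i : ℕ} (hi : c < i) :
    beta q i = beta p i := by
  unfold beta; rw [h.eq_gt i hi]

lemma RHP.beta_mid {p q : Partition'} {a c : ℕ} (h : RHP p q a c) {i : ℕ}
    (hi1 : a < i) (hi2 : i ≤ c) : beta q i = beta p (i - 1) := by
  unfold beta; rw [h.eq_mid i hi1 hi2]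
  have : ((i - 1 : ℕ) : ℤ) = (i : ℤ) - 1 := by omega
  rw [this]; push_cast; ring

lemma RHP.betaSet_eq' {p q : Partition'} {a c : ℕ} (h : RHP p q a c) :
    q.betaSet 0 = insert (beta q a) (p.betaSet 0 \ {beta p c}) := by
  have hinj := (beta_strictAnti p).injective
  rw [betaSet_eq, betaSet_eq]
  ext z
  simp only [Set.mem_range, Set.mem_insert_iff, Set.mem_diff, Set.mem_singleton_iff,
    Set.mem_range]
  constructor
  · rintro ⟨i, rfl⟩
    rcases lt_trichotomy i a with h1 | heq | h1
    · refine Or.inr ⟨⟨i, (h.beta_lt h1).symm⟩, ?_⟩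
      rw [h.beta_lt h1]
      exact fun e => absurd (hinj e) (by have := h.hac; omega)
    · subst heq; exact Or.inl rfl
    · by_cases h2 : i ≤ c
      · refine Or.inr ⟨⟨i - 1, (h.beta_mid h1 h2).symm⟩, ?_⟩
        rw [h.beta_mid h1 h2]
        exact fun e => absurd (hinj e) (by omega)
      · refine Or.inr ⟨⟨i, (h.beta_gt (by omega)).symm⟩, ?_⟩
        rw [h.beta_gt (show c < i by omega)]
        exact fun e => absurd (hinj e) (by omega)
  · rintro (rfl | ⟨⟨i, rfl⟩, hne⟩)
    · exact ⟨a, rfl⟩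
    · have hic : i ≠ c := fun e => hne (by rw [e])
      rcases lt_trichotomy i a with h1 | heq | h1
      · exact ⟨i, h.beta_lt h1⟩
      · subst heq
        rcases Nat.lt_or_ge i c with h2 | h2
        · exact ⟨i + 1, by rw [h.beta_mid (by omega) (by omega)]; simp⟩
        · exact absurd (le_antisymm h2 h.hac).symm hic
      · rcases Nat.lt_or_ge i c with h2 | h2
        · refine ⟨i + 1, ?_⟩
          rw [h.beta_mid (by omega) (by omega)]
          simp
        · exact ⟨i, h.beta_gt (by omega)⟩

lemma RHP.beta_not_mem {p q : Partition'} {a c : ℕ} (h : RHP p q a c) :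
    beta q a ∉ p.betaSet 0 := by
  rw [betaSet_eq]
  rintro ⟨i, hi⟩
  rcases Nat.lt_or_ge i a with hia | hia
  · have ha1 : 1 ≤ a := by omega
    have h1 : q.parts a ≤ q.parts (a - 1) := q.antitone (by omega)
    have h2 : q.parts (a - 1) = p.parts (a - 1) := h.eq_lt _ (by omega)
    have h3 : beta p (a - 1) ≤ beta p i := (beta_strictAnti p).antitone (by omega)
    unfold beta at hi h3
    omega
  · have h3 : beta p i ≤ beta p a := (beta_strictAnti p).antitone hia
    have h4 := h.lt_a
    unfold beta at hi h3
    omega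

/-- The parts of the partition obtained by the beta-number move. -/
def mkParts (p : Partition') (a c t : ℕ) : ℕ → ℕ := fun i =>
  if i < a then p.parts i
  else if i = a then t
  else if i ≤ c then p.parts (i - 1) + 1
  else p.parts i

lemma mkParts_partition (p : Partition') {a c t : ℕ} (hac : a ≤ c)
    (ht1 : p.parts a < t) (ht2 : ∀ a', a = a' + 1 → t ≤ p.parts a') :
    ∃ q : Partition', q.parts = mkParts p a c t ∧ RHP p q a c := by
  have hanti : ∀ i, mkParts p a c t (i + 1) ≤ mkParts p a c t i := by
    intro i
    simp only [mkParts]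
    rcases lt_trichotomy i a with h1 | heq | h1
    · rw [if_pos h1]
      rcases Nat.lt_or_ge (i + 1) a with h2 | h2
      · rw [if_pos h2]; exact p.antitone (by omega)
      · have he : i + 1 = a := by omega
        rw [if_neg (by omega), if_pos he]
        exact ht2 i he.symm
    · subst heq
      rw [if_neg (lt_irrefl i), if_pos rfl, if_neg (show ¬ i + 1 < i by omega),
        if_neg (show ¬ i + 1 = i by omega)]
      by_cases h3 : i + 1 ≤ c
      · rw [if_pos h3]
        simp only [Nat.add_sub_cancel]
        omega
      · rw [if_neg h3]
        have := p.antitone (show i ≤ i + 1 by omega)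
        omega
    · rw [if_neg (show ¬ i < a by omega), if_neg (show ¬ i = a by omega),
        if_neg (show ¬ i + 1 < a by omega), if_neg (show ¬ i + 1 = a by omega)]
      by_cases h3 : i ≤ c
      · rw [if_pos h3]
        by_cases h4 : i + 1 ≤ c
        · rw [if_pos h4]
          simp only [Nat.add_sub_cancel]
          have := p.antitone (show i - 1 ≤ i by omega)
          omega
        · rw [if_neg h4]
          have := p.antitone (show i - 1 ≤ i + 1 by omega)
          omega
      · rw [if_neg h3, if_neg (show ¬ i + 1 ≤ c by omega)]
        exact p.antitone (by omega)
  obtain ⟨N, hN⟩ := p.finite_support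
  refine ⟨⟨mkParts p a c t, antitone_nat_of_succ_le hanti, ⟨max N (c + 1), ?_⟩⟩, rfl, ?_⟩
  · intro i hi
    simp only [mkParts]
    rw [if_neg (show ¬ i < a by omega), if_neg (show ¬ i = a by omega),
      if_neg (show ¬ i ≤ c by omega)]
    exact hN i (by omega)
  · refine ⟨hac, ?_, ?_, ?_, ?_⟩
    · show p.parts a < mkParts p a c t a
      have he : mkParts p a c t a = t := by simp [mkParts]
      rw [he]
      exact ht1
    · intro i hi
      show mkParts p a c t i = p.parts i
      simp only [mkParts]
      rw [if_pos hi]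
    · intro i hi
      show mkParts p a c t i = p.parts i
      simp only [mkParts]
      rw [if_neg (show ¬ i < a by omega), if_neg (show ¬ i = a by omega),
        if_neg (show ¬ i ≤ c by omega)]
    · intro i hi1 hi2
      show mkParts p a c t i = p.parts (i - 1) + 1
      simp only [mkParts]
      rw [if_neg (show ¬ i < a by omega), if_neg (show ¬ i = a by omega), if_pos hi2]

end RimHookAux

/-- Increasing a single β-number of `λ` (charge 0) by `h`, when the result is not already a
β-number, yields the β-set of a partition `μ` obtained from `λ` by adding a rim hook of
length `h`; conversely, every way of wrapping an `h`-rim hook onto `λ` arises this way. -/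
theorem stmt5 (h : ℕ) (hh : 0 < h) (p q : Partition') :
    (∃ b ∈ p.betaSet 0, b + h ∉ p.betaSet 0 ∧
        q.betaSet 0 = insert (b + h) (p.betaSet 0 \ {b}))
      ↔ Partition'.AddRimHook p q h := by
  open RimHookAux in
  constructor
  · rintro ⟨b, hb, hnb, hq⟩
    rw [betaSet_eq] at hb
    obtain ⟨c, hc⟩ := hb
    have hint : (1 : ℤ) ≤ (h : ℤ) := by exact_mod_cast hh
    have hex : ∃ i, beta p i < b + h := ⟨c, by omega⟩
    set a := Nat.find hex with ha
    have haa : beta p a < b + h := Nat.find_spec hex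
    have hac : a ≤ c := Nat.find_min' hex (by omega)
    have hmin : ∀ i, i < a → b + h < beta p i := by
      intro i hi
      have h1 := Nat.find_min hex hi
      have h2 : beta p i ≠ b + h := by
        intro e
        exact hnb (by rw [betaSet_eq]; exact ⟨i, e⟩)
      omega
    set t : ℕ := (b + h + a + 1).toNat with htdef
    have hba : -((a : ℤ) + 1) ≤ beta p a := by
      unfold beta; omega
    have htpos : (t : ℤ) = b + h + a + 1 := by
      rw [htdef]
      apply Int.toNat_of_nonneg
      omega
    have ht1 : p.parts a < t := by
      unfold beta at haa
      omega
    have ht2 : ∀ a', a = a' + 1 → t ≤ p.parts a' := by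
      intro a' ha'
      have hm := hmin a' (by omega)
      unfold beta at hm
      omega
    obtain ⟨q'', hq''parts, hq''rhp⟩ := mkParts_partition p hac ht1 ht2
    have hbq : beta q'' a = b + h := by
      unfold beta
      rw [hq''parts]
      have he : mkParts p a c t a = t := by simp [mkParts]
      rw [he]
      omega
    have hset := hq''rhp.betaSet_eq'
    rw [hbq, hc] at hset
    have hqq : q = q'' := eq_of_betaSet_eq (by rw [hq, hset])
    have hrhp : RHP p q a c := hqq ▸ hq''rhp
    have hrim := hrhp.addRimHook
    have hnum : q.parts a + c - p.parts c - a = h := by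
      have h1 : p.parts a < q.parts a := hrhp.lt_a
      have h2 : p.parts c ≤ p.parts a := p.antitone hac
      have h3 : beta q a = b + h := by rw [hqq]; exact hbq
      unfold beta at h3 hc
      omega
    rwa [hnum] at hrim
  · intro hr
    obtain ⟨a, c, hrhp⟩ := addRimHook_RHP hh hr
    have hcard := hr.2.1
    rw [hrhp.card_diff] at hcard
    have hkey : beta p c + h = beta q a := by
      have h1 : p.parts a < q.parts a := hrhp.lt_a
      have h2 : p.parts c ≤ p.parts a := p.antitone hrhp.hac
      have h3 := hrhp.hac
      unfold beta
      omega
    refine ⟨beta p c, by rw [betaSet_eq]; exact ⟨c, rfl⟩, ?_, ?_⟩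
    · rw [hkey]
      exact hrhp.beta_not_mem
    · rw [hkey]
      exact hrhp.betaSet_eq'
end
end

section
/- For any partition λ and any residue f ∈ Z/eZ (e ≥ 2 finite), there exists a partition μ obtained from λ by wrapping on an e-rim hook whose foot node has residue f. -/
noncomputable section

lemma adjacent_symm' {a b : ℕ × ℕ} (h : Partition'.adjacent a b) : Partition'.adjacent b a := by
  unfold Partition'.adjacent at *
  tauto

lemma connected_of_path (S : Set (ℕ × ℕ)) (e : ℕ) (g : ℕ → ℕ × ℕ)
    (hmem : ∀ t < e, g t ∈ S) (hsurj : ∀ a ∈ S, ∃ t, t < e ∧ g t = a)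
    (hadj : ∀ t, t + 1 < e → Partition'.adjacent (g t) (g (t + 1))) :
    Partition'.ConnectedSet S := by
  intro a ha b hb
  obtain ⟨s, hs, rfl⟩ := hsurj a ha
  obtain ⟨t, ht, rfl⟩ := hsurj b hb
  rcases le_or_gt s t with hle | hlt
  · refine ⟨t - s, fun k => g (s + k), by simp, ?_, ?_, ?_⟩
    · show g (s + (t - s)) = g t
      congr 1
      omega
    · intro k hk
      exact hadj (s + k) (by omega)
    · intro k hk
      exact hmem _ (by omega)
  · refine ⟨s - t, fun k => g (s - k), by simp, ?_, ?_, ?_⟩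
    · show g (s - (s - t)) = g t
      congr 1
      omega
    · intro k hk
      have h1 := hadj (s - (k + 1)) (by omega)
      have e1 : s - (k + 1) + 1 = s - k := by omega
      rw [e1] at h1
      exact adjacent_symm' h1
    · intro k hk
      exact hmem _ (by omega)


/-- For any partition `λ` and any residue `f ∈ ℤ/eℤ`, there is a partition `μ` obtained from
`λ` by wrapping on an `e`-rim hook whose foot node (lowest, then leftmost, node of the added
hook) has residue `f`. -/
theorem stmt7 (e : ℕ) (he : 2 ≤ e) (p : Partition') (f : ZMod e) :
    ∃ (q : Partition') (x : ℕ × ℕ), Partition'.AddRimHook p q e ∧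
      x ∈ q.cells \ p.cells ∧
      (∀ y ∈ q.cells \ p.cells, y.1 ≤ x.1) ∧
      (∀ y ∈ q.cells \ p.cells, y.1 = x.1 → x.2 ≤ y.2) ∧
      (((x.2 : ℤ) - x.1 : ℤ) : ZMod e) = f := by
  classical
  haveI : NeZero e := ⟨by omega⟩
  have he0 : (2:ℤ) ≤ (e:ℤ) := by exact_mod_cast he
  set β : ℕ → ℤ := fun k => (p.parts k : ℤ) - k with hβdef
  have hβparts : ∀ k : ℕ, β k + k = (p.parts k : ℤ) := by
    intro k; simp [hβdef]
  have hβnn : ∀ k : ℕ, (0:ℤ) ≤ β k + k := by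
    intro k; rw [hβparts]; positivity
  have hβanti : ∀ {k l : ℕ}, k < l → β l < β k := by
    intro k l hkl
    have h1 : p.parts l ≤ p.parts k := p.antitone (le_of_lt hkl)
    have h1' : (p.parts l : ℤ) ≤ (p.parts k : ℤ) := by exact_mod_cast h1
    have h2 : (k:ℤ) < (l:ℤ) := by exact_mod_cast hkl
    simp only [hβdef]; omega
  have hβle : ∀ {k l : ℕ}, k ≤ l → β l ≤ β k := by
    intro k l hkl
    rcases eq_or_lt_of_le hkl with rfl | h
    · exact le_rfl
    · exact le_of_lt (hβanti h)
  obtain ⟨N, hN⟩ := p.finite_support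
  have hex : ∃ k : ℕ, ((β k : ZMod e) = f) := by
    refine ⟨(-f).val + e * N, ?_⟩
    have hk : N ≤ (-f).val + e * N := by nlinarith [Nat.le_mul_of_pos_left N (show 0 < e by omega)]
    have h0 : p.parts ((-f).val + e * N) = 0 := hN _ hk
    have : β ((-f).val + e * N) = -(((-f).val + e * N : ℕ) : ℤ) := by
      simp [hβdef, h0]
    rw [this]
    push_cast
    simp [ZMod.natCast_self, ZMod.natCast_val]
  set r := Nat.find hex with hrdef
  have hrspec : ((β r : ZMod e) = f) := Nat.find_spec hex
  have hrmin : ∀ k, k < r → ((β k : ZMod e) ≠ f) := fun k hk => Nat.find_min hex hk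
  have noclash : ∀ k, β k ≠ β r + e := by
    intro k hk
    have hres : ((β k : ZMod e) = f) := by
      rw [hk]; push_cast; simp [ZMod.natCast_self, hrspec]
    have hkr : k < r := by
      by_contra h
      have := hβle (not_lt.mp h)
      omega
    exact hrmin k hkr hres
  have hexi : ∃ i : ℕ, β i < β r + e := ⟨r, by omega⟩
  set i0 := Nat.find hexi with hi0def
  have hi0spec : β i0 < β r + e := Nat.find_spec hexi
  have hi0le : i0 ≤ r := Nat.find_min' hexi (by omega)
  have hi0lt : ∀ k, k < i0 → β r + e < β k := by
    intro k hk
    have h1 := Nat.find_min hexi hk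
    have h2 := noclash k
    omega
  -- the new partition
  set μp : ℕ → ℕ := fun k =>
    if k < i0 then p.parts k
    else if k = i0 then (β r + e + i0).toNat
    else if k ≤ r then p.parts (k - 1) + 1
    else p.parts k with hμdef
  have hμ0 : (0:ℤ) ≤ β r + e + i0 := by
    have := hβnn i0
    omega
  have hv1 : ∀ k, k < i0 → μp k = p.parts k := by
    intro k hk; simp [hμdef, hk]
  have hv2 : (μp i0 : ℤ) = β r + e + i0 := by
    simp only [hμdef, lt_irrefl, if_false, if_pos rfl, if_neg (lt_irrefl i0)]
    exact Int.toNat_of_nonneg hμ0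
  have hv3 : ∀ k, i0 < k → k ≤ r → μp k = p.parts (k - 1) + 1 := by
    intro k h1 h2
    simp [hμdef, Nat.lt_asymm h1, Nat.ne_of_gt h1, h2]
  have hv4 : ∀ k, r < k → μp k = p.parts k := by
    intro k hk
    have h1 : ¬ k < i0 := by omega
    have h2 : k ≠ i0 := by omega
    have h3 : ¬ k ≤ r := by omega
    simp [hμdef, h1, h2, h3]
  have hv1z : ∀ k, k < i0 → (μp k : ℤ) = β k + k := by
    intro k hk
    rw [hv1 _ hk, ← hβparts k]
  have hv3z : ∀ k, i0 < k → k ≤ r → (μp k : ℤ) = β (k - 1) + k := by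
    intro k h1 h2
    rw [hv3 _ h1 h2]
    have h3 := hβparts (k - 1)
    have h6 : (((k:ℕ) - 1 : ℕ) : ℤ) = (k:ℤ) - 1 := by
      have : 1 ≤ k := by omega
      omega
    push_cast
    omega
  have hv4z : ∀ k, r < k → (μp k : ℤ) = β k + k := by
    intro k hk
    rw [hv4 _ hk, ← hβparts k]
  have hmono : ∀ k, μp (k + 1) ≤ μp k := by
    intro k
    have goalz : (μp (k+1) : ℤ) ≤ (μp k : ℤ) → μp (k+1) ≤ μp k := by
      intro h; exact_mod_cast h
    apply goalz
    rcases lt_trichotomy (k + 1) i0 with h | h | h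
    · rw [hv1z _ h, hv1z _ (by omega)]
      have := hβanti (show k < k + 1 by omega)
      push_cast
      omega
    · rw [h, hv2, hv1z _ (by omega)]
      have h1 := hi0lt k (by omega)
      have h2 : (i0 : ℤ) = (k : ℤ) + 1 := by omega
      omega
    · have hk : i0 ≤ k := by omega
      rcases eq_or_lt_of_le hk with heq | hki0
      · -- i0 = k
        have hβeq : β i0 = β k := by rw [heq]
        have hμk : (μp k : ℤ) = β r + ↑e + ↑i0 := by rw [← heq]; exact hv2
        rcases Nat.lt_or_ge r (k + 1) with hr1 | hr1
        · -- r = k = i0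
          have hrk : r = k := by omega
          have hβr : β r = β k := by rw [hrk]
          rw [hv4z _ (by omega), hμk]
          have h1 := hβanti (show k < k + 1 by omega)
          have h2 : (i0 : ℤ) = (k : ℤ) := by omega
          omega
        · rw [hv3z (k+1) (by omega) hr1, hμk]
          have h3 : (k + 1 - 1) = k := by omega
          rw [h3]
          have h4 := hi0spec
          have h2 : (i0 : ℤ) = (k : ℤ) := by omega
          omega
      · -- i0 < k
        rcases Nat.lt_or_ge r k with hr1 | hr1
        · rw [hv4z _ (by omega), hv4z _ hr1]
          have := hβanti (show k < k + 1 by omega)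
          push_cast
          omega
        · rcases eq_or_lt_of_le hr1 with hreq | hr2
          · -- k = r
            rw [hv4z _ (by omega), hv3z _ hki0 (by omega)]
            have h1 := hβanti (show k - 1 < k by omega)
            have h2 := hβanti (show k < k + 1 by omega)
            push_cast
            omega
          · -- k + 1 ≤ r
            rw [hv3z _ (by omega) (by omega), hv3z _ hki0 (by omega)]
            have h3 : (k + 1 - 1) = k := by omega
            rw [h3]
            have h1 := hβanti (show k - 1 < k by omega)
            push_cast
            omega
  set q : Partition' := ⟨μp, antitone_nat_of_succ_le hmono, ⟨N + r + 1, fun i hi => by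
    rw [hv4 i (by omega)]; exact hN i (by omega)⟩⟩ with hqdef
  have hple : ∀ k, p.parts k ≤ μp k := by
    intro k
    have goalz : (p.parts k : ℤ) ≤ (μp k : ℤ) → p.parts k ≤ μp k := by
      intro h; exact_mod_cast h
    apply goalz
    rw [← hβparts k]
    rcases lt_trichotomy k i0 with h | h | h
    · rw [hv1z _ h]
    · rw [h, hv2]
      have h1 := hi0spec
      have h2 : β k = β i0 := by rw [h]
      have h3 : (k : ℤ) = (i0 : ℤ) := by omega
      omega
    · rcases Nat.lt_or_ge r k with hr | hr
      · rw [hv4z _ hr]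
      · rw [hv3z _ h hr]
        have h1 := hβanti (show k - 1 < k by omega)
        omega
  have hsub : p.cells ⊆ q.cells := by
    intro x hx
    simp only [Partition'.cells, Set.mem_setOf_eq] at *
    exact lt_of_lt_of_le hx (hple x.1)
  have hD : ∀ x : ℕ × ℕ, x ∈ q.cells \ p.cells ↔ (p.parts x.1 ≤ x.2 ∧ x.2 < μp x.1) := by
    intro x
    simp only [Set.mem_diff, Partition'.cells, Set.mem_setOf_eq, not_lt]
    tauto
  have hrow : ∀ x : ℕ × ℕ, x ∈ q.cells \ p.cells → i0 ≤ x.1 ∧ x.1 ≤ r := by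
    intro x hx
    rw [hD] at hx
    constructor
    · by_contra h
      rw [hv1 _ (by omega)] at hx
      omega
    · by_contra h
      rw [hv4 _ (by omega)] at hx
      omega
  -- the path
  have hexK : ∀ t : ℕ, ∃ k, β k ≤ β r + t := fun t => ⟨r, by omega⟩
  set K : ℕ → ℕ := fun t => Nat.find (hexK t) with hKdef
  have hKspec : ∀ t, β (K t) ≤ β r + t := fun t => Nat.find_spec (hexK t)
  have hKmin : ∀ t k, k < K t → β r + t < β k := by
    intro t k hk
    have := Nat.find_min (hexK t) hk
    omega
  have hKler : ∀ t, K t ≤ r := fun t => Nat.find_min' (hexK t) (by omega)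
  have hK0 : K 0 = r := by
    refine le_antisymm (hKler 0) ?_
    rw [hKdef]
    rw [Nat.le_find_iff]
    intro m hm
    have := hβanti hm
    push_cast
    omega
  have hKgei0 : ∀ t, t < e → i0 ≤ K t := by
    intro t ht
    refine Nat.find_min' hexi ?_
    have h1 := hKspec t
    have h2 : (t:ℤ) < e := by exact_mod_cast ht
    omega
  have hKstep : ∀ t, K (t + 1) ≤ K t ∧ K t ≤ K (t + 1) + 1 := by
    intro t
    constructor
    · refine Nat.find_min' (hexK (t+1)) ?_
      have := hKspec t
      push_cast
      omega
    · by_contra h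
      push_neg at h
      have h1 := hKmin t (K (t+1) + 1) h
      have h2 := hKspec (t+1)
      have h3 := hβanti (show K (t+1) < K (t+1) + 1 by omega)
      push_cast at h2
      omega
  set g : ℕ → ℕ × ℕ := fun t => (K t, (β r + t + K t).toNat) with hgdef
  have hgnn : ∀ t, (0:ℤ) ≤ β r + t + K t := by
    intro t
    have h1 := hKspec t
    have h2 := hβnn (K t)
    omega
  have hgcol : ∀ t, ((g t).2 : ℤ) = β r + t + K t := by
    intro t
    simp only [hgdef]
    exact Int.toNat_of_nonneg (hgnn t)
  have hgD : ∀ t, t < e → g t ∈ q.cells \ p.cells := by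
    intro t ht
    rw [hD]
    have hcol := hgcol t
    constructor
    · have h1 := hKspec t
      have h2 := hβparts (K t)
      have : (p.parts (K t) : ℤ) ≤ ((g t).2 : ℤ) := by rw [hcol]; omega
      exact_mod_cast this
    · have hi0K := hKgei0 t ht
      have hte : (t:ℤ) < e := by exact_mod_cast ht
      rcases eq_or_lt_of_le hi0K with heq | hlt
      · have : ((g t).2 : ℤ) < (μp (K t) : ℤ) := by
          rw [hcol, ← heq, hv2]
          omega
        exact_mod_cast this
      · have hKr := hKler t
        have hmin := hKmin t (K t - 1) (by omega)
        have : ((g t).2 : ℤ) < (μp (K t) : ℤ) := by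
          rw [hcol, hv3 _ hlt hKr]
          have h2 := hβparts (K t - 1)
          push_cast
          omega
        exact_mod_cast this
  have hDg : ∀ x ∈ q.cells \ p.cells, ∃ t, t < e ∧ g t = x := by
    intro x hx
    obtain ⟨h1, h2⟩ := hrow x hx
    rw [hD] at hx
    obtain ⟨ha, hb⟩ := hx
    set k := x.1 with hk
    set j := x.2 with hj
    have ha' : β k + k ≤ (j:ℤ) := by
      rw [hβparts]; exact_mod_cast ha
    set tz : ℤ := (j:ℤ) - β r - k with htz
    have htznn : 0 ≤ tz := by
      have := hβle h2
      omega
    have htze : tz < e := by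
      rcases eq_or_lt_of_le h1 with heq | hlt
      · have hb' : (j:ℤ) < (μp k : ℤ) := by exact_mod_cast hb
        rw [← heq, hv2] at hb'
        omega
      · have hb' : (j:ℤ) < (μp k : ℤ) := by exact_mod_cast hb
        rw [hv3 _ hlt h2] at hb'
        have h3 := hβparts (k - 1)
        have h4 := hβle (show i0 ≤ k - 1 by omega)
        have h5 : ((p.parts (k-1) + 1 : ℕ) : ℤ) = (p.parts (k-1) : ℤ) + 1 := by push_cast; ring
        rw [h5] at hb'
        have h6 : (((k:ℕ) - 1 : ℕ) : ℤ) = (k:ℤ) - 1 := by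
          have : 1 ≤ k := by omega
          push_cast [this]
          ring
        rw [h6] at h3
        omega
    refine ⟨tz.toNat, ?_, ?_⟩
    · have : (tz.toNat : ℤ) < (e:ℤ) := by rw [Int.toNat_of_nonneg htznn]; exact htze
      exact_mod_cast this
    · have htzc : ((tz.toNat : ℕ) : ℤ) = tz := Int.toNat_of_nonneg htznn
      have hKt : K tz.toNat = k := by
        have hle1 : K tz.toNat ≤ k := by
          refine Nat.find_min' _ ?_
          rw [htzc]
          omega
        have hle2 : k ≤ K tz.toNat := by
          rw [hKdef, Nat.le_find_iff]
          intro m hm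
          push_neg
          rw [htzc]
          have hm1 : β (k-1) ≤ β m := hβle (by omega)
          rcases eq_or_lt_of_le h1 with heq | hlt
          · have h7 := hi0lt (k-1) (by omega)
            omega
          · have hb' : (j:ℤ) < (μp k : ℤ) := by exact_mod_cast hb
            rw [hv3 _ hlt h2] at hb'
            have h3 := hβparts (k - 1)
            have h5 : ((p.parts (k-1) + 1 : ℕ) : ℤ) = (p.parts (k-1) : ℤ) + 1 := by push_cast; ring
            rw [h5] at hb'
            have h6 : (((k:ℕ) - 1 : ℕ) : ℤ) = (k:ℤ) - 1 := by
              have : 1 ≤ k := by omega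
              push_cast [this]
              ring
            rw [h6] at h3
            omega
        omega
      have hcolj : ((g tz.toNat).2 : ℤ) = (j:ℤ) := by
        rw [hgcol, htzc, hKt]
        omega
      have : (g tz.toNat).2 = j := by exact_mod_cast hcolj
      have hfst : (g tz.toNat).1 = k := hKt
      exact Prod.ext hfst this
  have hinj : Set.InjOn g ↑(Finset.range e) := by
    intro s hs t ht hst
    simp only [Finset.coe_range, Set.mem_Iio] at hs ht
    have h1 : K s = K t := by
      have := congrArg Prod.fst hst
      simpa [hgdef] using this
    have h2 := hgcol s
    have h3 := hgcol t
    rw [hst] at h2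
    rw [h1] at h2
    omega
  have hDeq : q.cells \ p.cells = g '' ↑(Finset.range e) := by
    ext x
    constructor
    · intro hx
      obtain ⟨t, ht, hgt⟩ := hDg x hx
      exact ⟨t, by simpa using ht, hgt⟩
    · rintro ⟨t, ht, rfl⟩
      simp only [Finset.coe_range, Set.mem_Iio] at ht
      exact hgD t ht
  have hcard : (q.cells \ p.cells).ncard = e := by
    rw [hDeq, Set.ncard_image_of_injOn hinj, Set.ncard_coe_finset, Finset.card_range]
  have hno22 : Partition'.No2x2 (q.cells \ p.cells) := by
    intro i j ⟨h1, h2, h3, h4⟩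
    have hr1 := hrow _ h1
    have hr2 := hrow _ h2
    rw [hD] at h1 h4
    simp only at h1 h4 hr1 hr2
    rw [hv3 (i+1) (by omega) (by omega)] at h4
    simp only [Nat.add_sub_cancel] at h4
    omega
  have hadjg : ∀ t, t + 1 < e → Partition'.adjacent (g t) (g (t + 1)) := by
    intro t ht
    obtain ⟨hs1, hs2⟩ := hKstep t
    have hc1 := hgcol t
    have hc2 := hgcol (t + 1)
    rcases eq_or_lt_of_le hs1 with heq | hlt
    · left
      constructor
      · simp [hgdef, heq]
      · left
        have : ((g t).2 : ℤ) + 1 = ((g (t+1)).2 : ℤ) := by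
          rw [hc1, hc2, heq]
          push_cast
          ring
        exact_mod_cast this
    · right
      have heq2 : K t = K (t + 1) + 1 := by omega
      constructor
      · have : ((g t).2 : ℤ) = ((g (t+1)).2 : ℤ) := by
          rw [hc1, hc2]
          omega
        exact_mod_cast this
      · right
        simp only [hgdef]
        omega
  have hconn : Partition'.ConnectedSet (q.cells \ p.cells) :=
    connected_of_path _ e g hgD hDg hadjg
  -- the foot
  have hg0 : g 0 = (r, p.parts r) := by
    have h1 : (g 0).1 = r := by simpa [hgdef] using hK0
    have h2 : ((g 0).2 : ℤ) = (p.parts r : ℤ) := by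
      rw [hgcol, hK0, ← hβparts r]
      push_cast
      ring
    have h2' : (g 0).2 = p.parts r := by exact_mod_cast h2
    exact Prod.ext h1 h2'
  refine ⟨q, (r, p.parts r), ⟨hsub, hcard, hconn, hno22⟩, ?_, ?_, ?_, ?_⟩
  · rw [← hg0]
    exact hgD 0 (by omega)
  · intro y hy
    exact (hrow y hy).2
  · intro y hy hy1
    rw [hD] at hy
    simp only at hy1
    rw [hy1] at hy
    exact hy.1
  · simp only
    have : ((p.parts r : ℤ) - (r:ℤ)) = β r := by simp [hβdef]
    rw [this]
    exact hrspec
end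
end

section
/- The e-core of a partition is well-defined: successively removing e-rim hooks from a partition λ in any order until no e-rim hook can be removed always yields the same partition, the e-core of λ. -/
noncomputable section

namespace Partition'

/-- β-numbers with charge 0. -/
def bfun (p : Partition') (i : ℕ) : ℤ := (p.parts i : ℤ) - i

def bset (p : Partition') : Set ℤ := Set.range p.bfun

lemma bfun_strictAnti (p : Partition') : StrictAnti p.bfun := by
  apply strictAnti_nat_of_succ_lt
  intro n
  have := p.antitone (Nat.le_add_right n 1)
  simp only [bfun]
  omega

lemma bfun_le (p : Partition') (i : ℕ) : p.bfun i ≤ p.bfun 0 - i := by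
  have := p.antitone (Nat.zero_le i)
  simp only [bfun]
  omega

lemma ext' {p q : Partition'} (h : p.parts = q.parts) : p = q := by
  cases p; cases q; cases h; rfl

lemma bfun_ext {p q : Partition'} (h : p.bfun = q.bfun) : p = q := by
  apply ext'
  funext i
  have := congrFun h i
  simp only [bfun] at this
  omega

lemma bset_inj {p q : Partition'} (h : p.bset = q.bset) : p = q := by
  have key : ∀ p q : Partition', p.bset = q.bset →
      ∀ i, (∀ j < i, p.bfun j = q.bfun j) → ¬ q.bfun i < p.bfun i := by
    intro p q h i ih hlt
    have hmem : p.bfun i ∈ q.bset := h ▸ Set.mem_range_self i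
    obtain ⟨j, hj⟩ := hmem
    have hji : j < i := by
      by_contra hc
      have := (q.bfun_strictAnti.antitone (not_lt.1 hc))
      omega
    have := ih j hji
    have := p.bfun_strictAnti hji
    omega
  apply bfun_ext
  funext i
  induction i using Nat.strong_induction_on with
  | _ i ih =>
    have h1 := key p q h i ih
    have h2 := key q p h.symm i (fun j hj => (ih j hj).symm)
    omega

lemma mem_diff_iff (p q : Partition') (x : ℕ × ℕ) :
    x ∈ q.cells \ p.cells ↔ p.parts x.1 ≤ x.2 ∧ x.2 < q.parts x.1 := by
  simp only [Set.mem_diff, cells, Set.mem_setOf_eq]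
  omega

lemma pointwise_le {p q : Partition'} (h : p.cells ⊆ q.cells) (i : ℕ) :
    p.parts i ≤ q.parts i := by
  by_contra hc
  have h0 : 0 < p.parts i := by omega
  have : (i, p.parts i - 1) ∈ p.cells := by simp only [cells, Set.mem_setOf_eq]; omega
  have := h this
  simp only [cells, Set.mem_setOf_eq] at this
  omega

lemma ncard_diff {p q : Partition'} (hle : ∀ i, p.parts i ≤ q.parts i) (N : ℕ)
    (hN : ∀ i, N ≤ i → q.parts i = 0) :
    (q.cells \ p.cells).ncard = ∑ i ∈ Finset.range N, (q.parts i - p.parts i) := by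
  classical
  have hset : q.cells \ p.cells =
      ↑((Finset.range N).biUnion fun i => ({i} : Finset ℕ) ×ˢ Finset.Ico (p.parts i) (q.parts i)) := by
    ext ⟨i, j⟩
    simp only [mem_diff_iff, Finset.coe_biUnion, Finset.mem_coe, Finset.mem_biUnion,
      Finset.mem_range, Finset.mem_product, Finset.mem_singleton, Finset.mem_Ico,
      Set.mem_iUnion]
    constructor
    · rintro ⟨h1, h2⟩
      refine ⟨i, ?_, rfl, h1, h2⟩
      by_contra hc
      have := hN i (by omega)
      omega
    · rintro ⟨k, _, rfl, h1, h2⟩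
      exact ⟨h1, h2⟩
  rw [hset, Set.ncard_coe_finset]
  rw [Finset.card_biUnion]
  · apply Finset.sum_congr rfl
    intro i _
    rw [Finset.card_product]
    simp [Nat.card_Ico]
  · intro i _ j _ hij
    simp only [Finset.disjoint_left]
    rintro ⟨a, b⟩ ha hb
    simp only [Finset.mem_product, Finset.mem_singleton] at ha hb
    exact hij (ha.1 ▸ hb.1 ▸ rfl)

lemma no2x2_iff {p q : Partition'} (hle : ∀ i, p.parts i ≤ q.parts i) :
    No2x2 (q.cells \ p.cells) ↔ ∀ i, q.parts (i + 1) ≤ p.parts i + 1 := by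
  constructor
  · intro h i
    by_contra hc
    apply h i (p.parts i)
    have hq1 := q.antitone (Nat.le_add_right i 1)
    have hp1 := p.antitone (Nat.le_add_right i 1)
    refine ⟨?_, ?_, ?_, ?_⟩ <;> · rw [mem_diff_iff]; constructor <;> simp <;> omega
  · intro h i j hc
    rw [mem_diff_iff] at hc
    obtain ⟨h1, h2, h3, h4⟩ := hc
    rw [mem_diff_iff] at h2 h3 h4
    have := h i
    simp at h1 h2 h3 h4
    omega

/-- Telescoping sum. -/
lemma tele (Q P : ℕ → ℤ) : ∀ b a : ℕ, a ≤ b → (∀ i, a ≤ i → i < b → Q (i + 1) = P i + 1) →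
    ∑ i ∈ Finset.Icc a b, (Q i - P i) = Q a + (b - a : ℕ) - P b := by
  intro b
  induction b with
  | zero => intro a ha _; interval_cases a; simp
  | succ b ih =>
    intro a ha hstep
    rcases Nat.lt_or_ge a (b + 1) with h | h
    · have hab : a ≤ b := by omega
      rw [Finset.sum_Icc_succ_top (by omega : a ≤ b + 1)]
      rw [ih a hab (fun i h1 h2 => hstep i h1 (by omega))]
      have := hstep b hab (by omega)
      have : ((b + 1 - a : ℕ) : ℤ) = ((b - a : ℕ) : ℤ) + 1 := by omega
      rw [this]
      have := hstep b hab (by omega)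
      omega
    · have : a = b + 1 := by omega
      subst this
      simp

end Partition'


namespace Partition'

/-- The β-set pattern lemma: if `p`'s β-numbers are obtained from `q`'s by
deleting the `a`-th and inserting `y` in position `b`, then the β-sets differ by one move. -/
lemma bset_pattern {p q : Partition'} {a b : ℕ} {y : ℤ} (hab : a ≤ b)
    (h1 : ∀ i, i < a → p.bfun i = q.bfun i)
    (h2 : ∀ i, a ≤ i → i < b → p.bfun i = q.bfun (i + 1))
    (h3 : p.bfun b = y)
    (h4 : ∀ i, b < i → p.bfun i = q.bfun i)
    (hlt : y < q.bfun b) :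
    y ∉ q.bset ∧ p.bset = insert y (q.bset \ {q.bfun a}) := by
  have hqa : StrictAnti q.bfun := q.bfun_strictAnti
  have hpa : StrictAnti p.bfun := p.bfun_strictAnti
  constructor
  · rintro ⟨j, hj⟩
    rcases Nat.lt_or_ge b j with h | h
    · have := h4 j h
      have := hpa (show b < j from h)
      omega
    · have := hqa.antitone h
      omega
  · ext z
    simp only [Set.mem_insert_iff, Set.mem_diff, Set.mem_singleton_iff, bset, Set.mem_range]
    constructor
    · rintro ⟨i, rfl⟩
      rcases Nat.lt_or_ge i a with h | h
      · right
        refine ⟨⟨i, (h1 i h).symm⟩, ?_⟩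
        rw [h1 i h]
        exact fun hc => absurd (hqa.injective hc) (by omega)
      · rcases Nat.lt_or_ge i b with h' | h'
        · right
          refine ⟨⟨i + 1, (h2 i h h').symm⟩, ?_⟩
          rw [h2 i h h']
          exact fun hc => absurd (hqa.injective hc) (by omega)
        · rcases Nat.lt_or_ge b i with h'' | h''
          · right
            refine ⟨⟨i, (h4 i h'').symm⟩, ?_⟩
            rw [h4 i h'']
            intro hc
            have hai : a < i := by omega
            have := hqa.injective hc
            omega
          · left
            have : i = b := by omega
            rw [this, h3]
    · rintro (rfl | ⟨⟨j, rfl⟩, hne⟩)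
      · exact ⟨b, h3⟩
      · have hja : j ≠ a := fun hc => hne (by rw [hc])
        rcases Nat.lt_or_ge j a with h | h
        · exact ⟨j, h1 j h⟩
        · rcases Nat.lt_or_ge b j with h' | h'
          · exact ⟨j, h4 j h'⟩
          · have hj1 : a ≤ j - 1 := by omega
            have hj2 : j - 1 < b := by omega
            refine ⟨j - 1, ?_⟩
            rw [h2 (j-1) hj1 hj2]
            congr 1
            omega

lemma adjacent_symm {u v : ℕ × ℕ} (h : adjacent u v) : adjacent v u := by
  unfold adjacent at *
  tauto

section Reach

variable (S : Set (ℕ × ℕ))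

/-- Reachability within `S`. -/
def Reach : ℕ × ℕ → ℕ × ℕ → Prop :=
  Relation.ReflTransGen (fun u v => adjacent u v ∧ u ∈ S ∧ v ∈ S)

lemma reach_symm : Symmetric (Reach S) :=
  fun a b h => (@Relation.ReflTransGen.stdSymm _ _ ⟨fun _ _ h => ⟨adjacent_symm h.1, h.2.2, h.2.1⟩⟩).symm a b h

lemma path_of_reach {u v : ℕ × ℕ} (hu : u ∈ S) (h : Reach S u v) :
    ∃ (n : ℕ) (f : ℕ → ℕ × ℕ),
      f 0 = u ∧ f n = v ∧ (∀ k < n, adjacent (f k) (f (k + 1))) ∧ (∀ k ≤ n, f k ∈ S) := by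
  induction h with
  | refl =>
    exact ⟨0, fun _ => u, rfl, rfl, by omega, fun k hk => by simpa using hu⟩
  | @tail v w hv hstep ih =>
    obtain ⟨n, f, hf0, hfn, hadj, hmem⟩ := ih
    refine ⟨n + 1, fun k => if k ≤ n then f k else w, by simp [hf0], by simp, ?_, ?_⟩
    · intro k hk
      rcases Nat.lt_or_ge k n with h | h
      · simpa [Nat.le_of_lt h, Nat.succ_le_of_lt h] using hadj k h
      · have : k = n := by omega
        subst this
        simpa [hfn] using hstep.1
    · intro k hk
      rcases Nat.lt_or_ge n k with h | h
      · simpa [Nat.not_le.2 h] using hstep.2.2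
      · simpa [h] using hmem k h

lemma reach_single {u v : ℕ × ℕ} (h : adjacent u v) (hu : u ∈ S) (hv : v ∈ S) :
    Reach S u v :=
  Relation.ReflTransGen.single ⟨h, hu, hv⟩

lemma reach_trans {u v w : ℕ × ℕ} (h1 : Reach S u v) (h2 : Reach S v w) : Reach S u w :=
  Relation.ReflTransGen.trans h1 h2

end Reach

/-- From a path in S between a cell in a high row and a cell in a low row,
extract a vertical domino at level k/k+1. -/
lemma exists_vert {S : Set (ℕ × ℕ)} (hconn : ConnectedSet S) {u v : ℕ × ℕ}
    (hu : u ∈ S) (hv : v ∈ S) {k : ℕ} (hku : k < u.1) (hkv : v.1 ≤ k) :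
    ∃ j, (k, j) ∈ S ∧ (k + 1, j) ∈ S := by
  obtain ⟨n, f, hf0, hfn, hadj, hmem⟩ := hconn u hu v hv
  have hex : ∃ m, (f m).1 ≤ k := ⟨n, by rw [hfn]; exact hkv⟩
  classical
  have hmspec : (f (Nat.find hex)).1 ≤ k := Nat.find_spec hex
  have hmn : Nat.find hex ≤ n := Nat.find_min' hex (by rw [hfn]; exact hkv)
  have hm0 : Nat.find hex ≠ 0 := by
    intro hc
    rw [hc, hf0] at hmspec
    omega
  obtain ⟨m', hm'⟩ : ∃ m'', Nat.find hex = m'' + 1 := ⟨Nat.find hex - 1, by omega⟩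
  rw [hm'] at hmspec hmn
  have hprev : ¬ (f m').1 ≤ k := Nat.find_min hex (by omega)
  have hadj' := hadj m' (by omega)
  have hm'mem : f m' ∈ S := hmem m' (by omega)
  have hmmem : f (m' + 1) ∈ S := hmem (m' + 1) (by omega)
  rcases hadj' with ⟨hrow, _⟩ | ⟨hcol, hd⟩
  · omega
  · rcases hd with h | h
    · omega
    · have h1 : (f (m' + 1)).1 = k := by omega
      refine ⟨(f (m' + 1)).2, ?_, ?_⟩
      · have : ((f (m' + 1)).1, (f (m' + 1)).2) = f (m' + 1) := rfl
        rw [← h1] at *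
        simpa [this] using hmmem
      · have h2 : (f m').1 = k + 1 := by omega
        have hc2 : (f m').2 = (f (m' + 1)).2 := hcol
        have : ((f m').1, (f m').2) = f m' := rfl
        rw [← h2, ← hc2]
        simpa [this] using hm'mem

end Partition'


namespace Partition'

lemma addRimHook_beta {p q : Partition'} {e : ℕ} (he : 1 ≤ e) (h : AddRimHook p q e) :
    ∃ x : ℤ, x ∈ q.bset ∧ x - e ∉ q.bset ∧ p.bset = insert (x - e) (q.bset \ {x}) := by
  classical
  obtain ⟨hsub, hcard, hconn, h2x2⟩ := h
  have hle := pointwise_le hsub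
  obtain ⟨N, hN⟩ := q.finite_support
  have hsum : ∑ i ∈ Finset.range N, (q.parts i - p.parts i) = e := by
    rw [← ncard_diff hle N hN]; exact hcard
  have hex : ∃ i, i < N ∧ p.parts i < q.parts i := by
    by_contra hc
    push_neg at hc
    have : ∑ i ∈ Finset.range N, (q.parts i - p.parts i) = 0 :=
      Finset.sum_eq_zero fun i hi => by
        have h1 := hc i (Finset.mem_range.1 hi)
        have h2 := hle i
        omega
    omega
  obtain ⟨i0, hi0N, hi0⟩ := hex
  set Rf : Finset ℕ := (Finset.range N).filter (fun i => p.parts i < q.parts i) with hRf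
  have hne : Rf.Nonempty := ⟨i0, by simp [hRf, Finset.mem_filter, hi0N, hi0]⟩
  set a := Rf.min' hne with haa
  set b := Rf.max' hne with hbb
  have ha : p.parts a < q.parts a := (Finset.mem_filter.1 (Rf.min'_mem hne)).2
  have hb : p.parts b < q.parts b := (Finset.mem_filter.1 (Rf.max'_mem hne)).2
  have hbound : ∀ i, p.parts i < q.parts i → a ≤ i ∧ i ≤ b := by
    intro i hi
    have hiN : i < N := by
      by_contra hc
      have := hN i (by omega)
      omega
    have hiR : i ∈ Rf := Finset.mem_filter.2 ⟨Finset.mem_range.2 hiN, hi⟩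
    exact ⟨Rf.min'_le i hiR, Rf.le_max' i hiR⟩
  have hab : a ≤ b := (hbound b hb).1
  have houts : ∀ i, i < a ∨ b < i → q.parts i = p.parts i := by
    intro i hi
    have h1 := hle i
    by_contra hc
    have := hbound i (by omega)
    omega
  have hstep : ∀ k, a ≤ k → k < b → q.parts (k + 1) = p.parts k + 1 := by
    intro k hak hkb
    have hu : (b, p.parts b) ∈ q.cells \ p.cells := (mem_diff_iff p q _).2 ⟨le_refl _, hb⟩
    have hv : (a, p.parts a) ∈ q.cells \ p.cells := (mem_diff_iff p q _).2 ⟨le_refl _, ha⟩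
    obtain ⟨j, hkj, hk1j⟩ := exists_vert hconn hu hv (show k < (b, p.parts b).1 from hkb)
      (show (a, p.parts a).1 ≤ k from hak)
    rw [mem_diff_iff] at hkj hk1j
    simp only at hkj hk1j
    have := ((no2x2_iff hle).1 h2x2) k
    omega
  have hbN : b < N := by
    by_contra hc
    have := hN b (by omega)
    omega
  have hcast : ((e : ℕ) : ℤ) = ∑ i ∈ Finset.range N, ((q.parts i : ℤ) - p.parts i) := by
    rw [← hsum, Nat.cast_sum]
    exact Finset.sum_congr rfl fun i _ => by have := hle i; omega
  have hrestrict : ∑ i ∈ Finset.range N, ((q.parts i : ℤ) - p.parts i)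
      = ∑ i ∈ Finset.Icc a b, ((q.parts i : ℤ) - p.parts i) := by
    refine (Finset.sum_subset ?_ ?_).symm
    · intro i hi
      rw [Finset.mem_Icc] at hi
      exact Finset.mem_range.2 (by omega)
    · intro i _ hi
      rw [Finset.mem_Icc] at hi
      have := houts i (by omega)
      omega
  have htele := tele (fun i => (q.parts i : ℤ)) (fun i => (p.parts i : ℤ)) b a hab
    (fun i h1 h2 => by rw [hstep i h1 h2]; push_cast; ring)
  have hba : ((b - a : ℕ) : ℤ) = (b : ℤ) - a := by omega
  have h3 : p.bfun b = q.bfun a - e := by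
    simp only [bfun]
    rw [hcast, hrestrict, htele, hba]
    ring
  have h1' : ∀ i, i < a → p.bfun i = q.bfun i := by
    intro i hi
    have := houts i (Or.inl hi)
    simp only [bfun]
    omega
  have h2' : ∀ i, a ≤ i → i < b → p.bfun i = q.bfun (i + 1) := by
    intro i hi1 hi2
    have := hstep i hi1 hi2
    simp only [bfun]
    push_cast [this]
    ring
  have h4' : ∀ i, b < i → p.bfun i = q.bfun i := by
    intro i hi
    have := houts i (Or.inr hi)
    simp only [bfun]
    omega
  have hlt : q.bfun a - e < q.bfun b := by
    rcases Nat.eq_or_lt_of_le hab with h | h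
    · rw [← h]; omega
    · have hh := h2' (b - 1) (by omega) (by omega)
      have : b - 1 + 1 = b := by omega
      rw [this] at hh
      have := p.bfun_strictAnti (show b - 1 < b by omega)
      omega
  obtain ⟨hnotmem, hpat⟩ := bset_pattern hab h1' h2' h3 h4' hlt
  exact ⟨q.bfun a, ⟨a, rfl⟩, hnotmem, hpat⟩

end Partition'


namespace Partition'

lemma beta_addRimHook {q : Partition'} {e : ℕ} (he : 1 ≤ e) {x : ℤ}
    (hx : x ∈ q.bset) (hx' : x - e ∉ q.bset) :
    ∃ p : Partition', AddRimHook p q e ∧ p.bset = insert (x - e) (q.bset \ {x}) := by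
  classical
  obtain ⟨a, ha⟩ := hx
  set y := x - e with hy
  have hbex : ∃ i, a ≤ i ∧ q.bfun (i + 1) ≤ y := by
    refine ⟨max a (q.bfun 0 - y).toNat, le_max_left _ _, ?_⟩
    have h0 := q.bfun_le (max a (q.bfun 0 - y).toNat + 1)
    omega
  set b := Nat.find hbex with hbdef
  have hab : a ≤ b := (Nat.find_spec hbex).1
  have hb1 : q.bfun (b + 1) ≤ y := (Nat.find_spec hbex).2
  have hb1' : q.bfun (b + 1) < y :=
    lt_of_le_of_ne hb1 (fun hc => hx' ⟨b + 1, hc⟩)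
  have hb2 : y < q.bfun b := by
    rcases Nat.eq_or_lt_of_le hab with h | h
    · rw [← h, ha]; omega
    · have hmin := Nat.find_min hbex (show b - 1 < b by omega)
      rw [show b - 1 + 1 = b by omega] at hmin
      push_neg at hmin
      exact hmin (by omega)
  have q1 : ∀ i, a ≤ i → i < b → 1 ≤ q.parts (i + 1) := by
    intro i h1 h2
    by_contra hc
    have hqb : q.parts b = 0 := by
      have := q.antitone (show i + 1 ≤ b by omega); omega
    have hqb1 : q.parts (b + 1) = 0 := by
      have := q.antitone (show i + 1 ≤ b + 1 by omega); omega
    have e1 : q.bfun b = -(b : ℤ) := by simp [bfun, hqb]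
    have e2 : q.bfun (b + 1) = -(b : ℤ) - 1 := by
      simp only [bfun, hqb1]
      push_cast
      ring
    omega
  have hy0 : 0 ≤ y + b := by simp only [bfun] at hb1'; omega
  have hyq : y + b < (q.parts b : ℤ) := by simp only [bfun] at hb2; omega
  have hqb1y : (q.parts (b + 1) : ℤ) ≤ y + b := by simp only [bfun] at hb1'; omega
  set sp : ℕ → ℕ := fun i =>
    if i < a then q.parts i
    else if i < b then q.parts (i + 1) - 1
    else if i = b then (y + b).toNat
    else q.parts i with hspdef
  have hsp1 : ∀ i, i < a → sp i = q.parts i := fun i hi => by simp [hspdef, hi]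
  have hsp2 : ∀ i, a ≤ i → i < b → (sp i : ℤ) = (q.parts (i + 1) : ℤ) - 1 := by
    intro i h1 h2
    have := q1 i h1 h2
    simp only [hspdef, show ¬ i < a by omega, if_false, h2, if_true]
    omega
  have hsp3' : sp b = (y + b).toNat := by
    simp only [hspdef]
    rw [if_neg (by omega : ¬ b < a), if_neg (lt_irrefl b)]
    simp
  have hsp3 : (sp b : ℤ) = y + b := by rw [hsp3']; omega
  have hsp4 : ∀ i, b < i → sp i = q.parts i := fun i hi => by
    simp [hspdef, show ¬ i < a by omega, show ¬ i < b by omega, show ¬ i = b by omega]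
  have hmono : ∀ n, sp (n + 1) ≤ sp n := by
    intro n
    have hq := q.antitone (Nat.le_add_right n 1)
    have hq2 := q.antitone (Nat.le_add_right (n + 1) 1)
    suffices h : (sp (n + 1) : ℤ) ≤ (sp n : ℤ) by exact_mod_cast h
    rcases Nat.lt_or_ge (n + 1) a with h1 | h1
    · rw [hsp1 _ h1, hsp1 _ (by omega)]; exact_mod_cast hq
    · rcases Nat.lt_or_ge n b with h2 | h2
      · -- n < b
        rcases Nat.lt_or_ge n a with h3 | h3
        · -- n + 1 = a
          have hna : n + 1 = a := by omega
          rw [hsp1 _ h3]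
          rcases Nat.lt_or_ge (n + 1) b with h4 | h4
          · rw [hsp2 _ (by omega) h4]
            have := q.antitone (show n ≤ n + 1 + 1 by omega)
            omega
          · have hnb : n + 1 = b := by omega
            rw [hnb, hsp3]
            have := q.antitone (show n ≤ b by omega)
            omega
        · -- a ≤ n < b
          rw [hsp2 _ h3 h2]
          rcases Nat.lt_or_ge (n + 1) b with h4 | h4
          · rw [hsp2 _ (by omega) h4]
            omega
          · have hnb : n + 1 = b := by omega
            rw [hnb, hsp3]
            omega
      · -- b ≤ n
        rcases Nat.eq_or_lt_of_le h2 with h3 | h3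
        · -- n = b
          have hnb : n = b := h3.symm
          subst hnb
          rw [hsp4 _ (by omega), hsp3]
          omega
        · rw [hsp4 _ (by omega), hsp4 _ h3]
          exact_mod_cast hq
  set p : Partition' := ⟨sp, antitone_nat_of_succ_le hmono, by
    obtain ⟨N, hN⟩ := q.finite_support
    exact ⟨max N (b + 1), fun i hi => by
      rw [hsp4 i (by omega)]; exact hN i (by omega)⟩⟩ with hpdef
  have hparts : ∀ i, p.parts i = sp i := fun i => rfl
  have hle : ∀ i, p.parts i ≤ q.parts i := by
    intro i
    rw [hparts]
    suffices h : (sp i : ℤ) ≤ (q.parts i : ℤ) by exact_mod_cast h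
    rcases Nat.lt_or_ge i a with h1 | h1
    · rw [hsp1 _ h1]
    · rcases Nat.lt_or_ge i b with h2 | h2
      · rw [hsp2 _ h1 h2]
        have := q.antitone (Nat.le_add_right i 1)
        omega
      · rcases Nat.eq_or_lt_of_le h2 with h3 | h3
        · rw [← h3] at *; rw [hsp3]; omega
        · rw [hsp4 _ h3]
  have hsub : p.cells ⊆ q.cells := by
    intro z hz
    simp only [cells, Set.mem_setOf_eq] at *
    have := hle z.1
    omega
  have hlt' : ∀ i, a ≤ i → i ≤ b → sp i < q.parts i := by
    intro i h1 h2
    suffices h : (sp i : ℤ) < (q.parts i : ℤ) by exact_mod_cast h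
    rcases Nat.lt_or_ge i b with h3 | h3
    · rw [hsp2 _ h1 h3]
      have := q.antitone (Nat.le_add_right i 1)
      have := q1 i h1 h3
      omega
    · have : i = b := by omega
      rw [this, hsp3]
      exact hyq
  have hrow : ∀ i j : ℕ, ((i, j) ∈ q.cells \ p.cells) ↔ (sp i ≤ j ∧ j < q.parts i) := by
    intro i j
    exact mem_diff_iff p q (i, j)
  have hrows_range : ∀ i j : ℕ, (i, j) ∈ q.cells \ p.cells → a ≤ i ∧ i ≤ b := by
    intro i j hij
    rw [hrow] at hij
    by_contra hc
    have : sp i = q.parts i := by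
      rcases Nat.lt_or_ge i a with h1 | h1
      · exact hsp1 i h1
      · exact hsp4 i (by omega)
    omega
  -- ncard
  obtain ⟨N, hN⟩ := q.finite_support
  set M := max N (b + 1) with hM
  have hNM : ∀ i, M ≤ i → q.parts i = 0 := fun i hi => hN i (by omega)
  have hncard0 := ncard_diff hle M hNM
  have hcast : (((q.cells \ p.cells).ncard : ℕ) : ℤ)
      = ∑ i ∈ Finset.range M, ((q.parts i : ℤ) - (sp i : ℤ)) := by
    rw [hncard0, Nat.cast_sum]
    refine Finset.sum_congr rfl fun i _ => ?_
    have h1 := hle i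
    have h2 := hparts i
    omega
  have hrestrict : ∑ i ∈ Finset.range M, ((q.parts i : ℤ) - (sp i : ℤ))
      = ∑ i ∈ Finset.Icc a b, ((q.parts i : ℤ) - (sp i : ℤ)) := by
    refine (Finset.sum_subset ?_ ?_).symm
    · intro i hi
      rw [Finset.mem_Icc] at hi
      exact Finset.mem_range.2 (by omega)
    · intro i _ hi
      rw [Finset.mem_Icc] at hi
      have : sp i = q.parts i := by
        rcases Nat.lt_or_ge i a with h1 | h1
        · exact hsp1 i h1
        · exact hsp4 i (by omega)
      omega
  have htele := tele (fun i => (q.parts i : ℤ)) (fun i => (sp i : ℤ)) b a hab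
    (fun i h1 h2 => by rw [hsp2 i h1 h2]; ring)
  have hncard : (q.cells \ p.cells).ncard = e := by
    have hba : ((b - a : ℕ) : ℤ) = (b : ℤ) - a := by omega
    have hx2 : (q.parts a : ℤ) - a = x := by simp only [bfun] at ha; omega
    have : (((q.cells \ p.cells).ncard : ℕ) : ℤ) = (e : ℤ) := by
      rw [hcast, hrestrict, htele, hba]
      simp only [hsp3]
      omega
    exact_mod_cast this
  -- no 2x2
  have hno2x2 : No2x2 (q.cells \ p.cells) := by
    rw [no2x2_iff hle]
    intro i
    rw [hparts]
    suffices h : (q.parts (i + 1) : ℤ) ≤ (sp i : ℤ) + 1 by exact_mod_cast h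
    have hq := q.antitone (Nat.le_add_right i 1)
    rcases Nat.lt_or_ge i a with h1 | h1
    · rw [hsp1 _ h1]; omega
    · rcases Nat.lt_or_ge i b with h2 | h2
      · rw [hsp2 _ h1 h2]; omega
      · rcases Nat.eq_or_lt_of_le h2 with h3 | h3
        · rw [← h3] at *; rw [hsp3]; omega
        · rw [hsp4 _ h3]; omega
  -- connectivity
  set S := q.cells \ p.cells with hS
  have hanchor : (b, sp b) ∈ S := (hrow b (sp b)).2 ⟨le_refl _, hlt' b hab (le_refl b)⟩
  have reach_right : ∀ i j d, (i, j) ∈ S → (i, j + d) ∈ S → Reach S (i, j) (i, j + d) := by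
    intro i j d
    induction d with
    | zero => intro h _; exact Relation.ReflTransGen.refl
    | succ d ih =>
      intro h1 h2
      have hb1 := (hrow i j).1 h1
      have hb2 := (hrow i (j + (d + 1))).1 h2
      have hmid : (i, j + d) ∈ S := (hrow _ _).2 ⟨by omega, by omega⟩
      exact reach_trans S (ih h1 hmid)
        (reach_single S (show adjacent (i, j + d) (i, j + (d + 1)) from Or.inl ⟨rfl, Or.inl rfl⟩) hmid h2)
  have row_reach : ∀ i j j', (i, j) ∈ S → (i, j') ∈ S → Reach S (i, j) (i, j') := by
    intro i j j' h1 h2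
    rcases Nat.lt_or_ge j' j with h | h
    · obtain ⟨d, rfl⟩ : ∃ d, j = j' + d := ⟨j - j', by omega⟩
      exact reach_symm S (reach_right i j' d h2 h1)
    · obtain ⟨d, rfl⟩ : ∃ d, j' = j + d := ⟨j' - j, by omega⟩
      exact reach_right i j d h1 h2
  have descend : ∀ m i j, b = i + m → (i, j) ∈ S → Reach S (i, j) (b, sp b) := by
    intro m
    induction m with
    | zero =>
      intro i j hi hij
      have hib : i = b := by omega
      subst hib
      exact row_reach b j (sp b) hij ((hrow _ _).2 ⟨le_refl _, hlt' b hab (le_refl b)⟩)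
    | succ m ih =>
      intro i j hi hij
      have hib : i < b := by omega
      have hia : a ≤ i := (hrows_range i j hij).1
      have hc1 : (i, sp i) ∈ S := (hrow _ _).2 ⟨le_refl _, hlt' i hia (by omega)⟩
      have hc2 : (i + 1, sp i) ∈ S := by
        refine (hrow _ _).2 ⟨?_, ?_⟩
        · have hx1 := hsp2 i hia hib
          have hx2 := hlt' (i + 1) (by omega) (by omega)
          omega
        · have hx1 := hsp2 i hia hib
          omega
      refine reach_trans S (row_reach i j (sp i) hij hc1) ?_
      refine reach_trans S
        (reach_single S (show adjacent (i, sp i) (i + 1, sp i) from Or.inr ⟨rfl, Or.inl rfl⟩) hc1 hc2) ?_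
      exact ih (i + 1) (sp i) (by omega) hc2
  have hconn : ConnectedSet S := by
    rintro ⟨u1, u2⟩ hu ⟨v1, v2⟩ hv
    have h1 := descend (b - u1) u1 u2 (by have := (hrows_range u1 u2 hu).2; omega) hu
    have h2 := descend (b - v1) v1 v2 (by have := (hrows_range v1 v2 hv).2; omega) hv
    exact path_of_reach S hu (reach_trans S h1 (reach_symm S h2))
  -- beta set
  have hbfun : ∀ i, p.bfun i = (sp i : ℤ) - i := fun i => rfl
  have hpat := bset_pattern (p := p) (q := q) hab
    (fun i hi => by rw [hbfun, hsp1 i hi]; rfl)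
    (fun i h1 h2 => by rw [hbfun, hsp2 i h1 h2]; simp only [bfun]; push_cast; ring)
    (y := y) (by rw [hbfun, hsp3]; ring)
    (fun i hi => by rw [hbfun, hsp4 i hi]; rfl)
    hb2
  refine ⟨p, ⟨hsub, hncard, hconn, hno2x2⟩, ?_⟩
  rw [hpat.2, ha]

end Partition'


namespace Partition'

lemma diamond {e : ℕ} (he : 1 ≤ e) (u v w : Partition')
    (hv : AddRimHook v u e) (hw : AddRimHook w u e) :
    v = w ∨ ∃ d, AddRimHook d v e ∧ AddRimHook d w e := by
  obtain ⟨x1, hx1, hx1e, hB1⟩ := addRimHook_beta he hv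
  obtain ⟨x2, hx2, hx2e, hB2⟩ := addRimHook_beta he hw
  by_cases hx12 : x1 = x2
  · left
    exact bset_inj (hB1.trans (by rw [hx12, ← hB2]))
  · right
    have hne1 : x2 ≠ x1 - e := fun hc => hx1e (hc ▸ hx2)
    have hne2 : x1 ≠ x2 - e := fun hc => hx2e (hc ▸ hx1)
    have hx2v : x2 ∈ v.bset := by
      rw [hB1]
      exact Set.mem_insert_iff.2 (Or.inr ⟨hx2, hx12 ∘ Eq.symm⟩)
    have hx2ev : x2 - e ∉ v.bset := by
      rw [hB1]
      rintro (h | ⟨h, -⟩)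
      · exact hx12 (by omega)
      · exact hx2e h
    have hx1w : x1 ∈ w.bset := by
      rw [hB2]
      exact Set.mem_insert_iff.2 (Or.inr ⟨hx1, hx12⟩)
    have hx1ew : x1 - e ∉ w.bset := by
      rw [hB2]
      rintro (h | ⟨h, -⟩)
      · exact hx12 (by omega)
      · exact hx1e h
    obtain ⟨d1, hd1, hBd1⟩ := beta_addRimHook he hx2v hx2ev
    obtain ⟨d2, hd2, hBd2⟩ := beta_addRimHook he hx1w hx1ew
    have hdd : d1 = d2 := by
      apply bset_inj
      rw [hBd1, hBd2, hB1, hB2]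
      ext z
      simp only [Set.mem_insert_iff, Set.mem_diff, Set.mem_singleton_iff]
      constructor
      · rintro (rfl | ⟨(rfl | ⟨hzB, hz1⟩), hz2⟩)
        · exact Or.inr ⟨Or.inl rfl, fun hc => hne2 hc.symm⟩
        · exact Or.inl rfl
        · exact Or.inr ⟨Or.inr ⟨hzB, hz2⟩, hz1⟩
      · rintro (rfl | ⟨(rfl | ⟨hzB, hz1⟩), hz2⟩)
        · exact Or.inr ⟨Or.inl rfl, fun hc => hne1 hc.symm⟩
        · exact Or.inl rfl
        · exact Or.inr ⟨Or.inr ⟨hzB, hz2⟩, hz1⟩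
    exact ⟨d1, hd1, hdd ▸ hd2⟩

end Partition'


/-- The `e`-core is well defined: successively removing `e`-rim hooks from `λ` in any order
until none can be removed always yields the same partition. -/
theorem stmt8 (e : ℕ) (he : 2 ≤ e) (p q q' : Partition')
    (h1 : Relation.ReflTransGen (fun a b => Partition'.AddRimHook b a e) p q)
    (h2 : Relation.ReflTransGen (fun a b => Partition'.AddRimHook b a e) p q')
    (hq : ¬ ∃ s, Partition'.AddRimHook s q e)
    (hq' : ¬ ∃ s, Partition'.AddRimHook s q' e) :
    q = q' := by
  have he1 : 1 ≤ e := by omega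
  have hcr : ∀ a b c : Partition',
      (fun a b => Partition'.AddRimHook b a e) a b →
      (fun a b => Partition'.AddRimHook b a e) a c →
      ∃ d, Relation.ReflGen (fun a b => Partition'.AddRimHook b a e) b d ∧
        Relation.ReflTransGen (fun a b => Partition'.AddRimHook b a e) c d := by
    intro a b c hb hc
    rcases Partition'.diamond he1 a b c hb hc with h | ⟨d, hd1, hd2⟩
    · exact ⟨b, Relation.ReflGen.refl, h ▸ Relation.ReflTransGen.refl⟩
    · exact ⟨d, Relation.ReflGen.single hd1, Relation.ReflTransGen.single hd2⟩
  obtain ⟨d, hd1, hd2⟩ := Relation.church_rosser hcr h1 h2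
  have hnf : ∀ A B : Partition',
      Relation.ReflTransGen (fun a b => Partition'.AddRimHook b a e) A B →
      (¬ ∃ s, Partition'.AddRimHook s A e) → A = B := by
    intro A B hAB hA
    rcases Relation.ReflTransGen.cases_head hAB with h | ⟨c, hc, -⟩
    · exact h
    · exact absurd ⟨c, hc⟩ hA
  exact (hnf q d hd1 hq).trans (hnf q' d hd2 hq').symm
end
end

section
/- Two partitions λ and μ of n have the same e-core if and only if C_f(λ) = C_f(μ) for all f ∈ Z/eZ, where C_f(λ) is the number of nodes (i,j) ∈ [λ] with j - i ≡ f (mod e). -/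
noncomputable section

namespace P9
open Partition' Finset

variable {e : ℕ} {p q s : Partition'}

/-- β-numbers (charge 0, 0-indexed): `β i = λ_i - i - 1`. -/
def beta (p : Partition') (i : ℕ) : ℤ := (p.parts i : ℤ) - i - 1

lemma beta_strictAnti (p : Partition') : StrictAnti (beta p) := by
  intro a b hab
  have h := p.antitone (le_of_lt hab)
  have h' : (p.parts b : ℤ) ≤ p.parts a := by exact_mod_cast h
  unfold beta; omega

def bnd (p : Partition') : ℕ := Classical.choose p.finite_support

lemma bnd_spec (p : Partition') : ∀ i, bnd p ≤ i → p.parts i = 0 :=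
  Classical.choose_spec p.finite_support

lemma beta_bnd {i : ℕ} (h : bnd p ≤ i) : beta p i = -(i:ℤ) - 1 := by
  unfold beta; rw [bnd_spec p i h]; push_cast; ring

lemma beta_ge (p : Partition') (i : ℕ) : -(i:ℤ) - 1 ≤ beta p i := by
  unfold beta; have : (0:ℤ) ≤ p.parts i := Int.ofNat_nonneg _; omega

lemma parts_eq_of_beta {i : ℕ} : (p.parts i : ℤ) = beta p i + i + 1 := by unfold beta; ring

/-- The finset of cells (given a support bound `N`). -/
def cellsF (p : Partition') (N : ℕ) : Finset (ℕ × ℕ) :=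
  (Finset.range N).biUnion (fun i => (Finset.range (p.parts i)).image (fun j => (i, j)))

lemma mem_cellsF {N : ℕ} (hN : ∀ i, N ≤ i → p.parts i = 0) {x : ℕ × ℕ} :
    x ∈ cellsF p N ↔ x ∈ p.cells := by
  obtain ⟨i, j⟩ := x
  simp only [cellsF, mem_biUnion, mem_range, mem_image, Partition'.cells, Set.mem_setOf_eq]
  constructor
  · rintro ⟨a, ha, b, hb, h⟩
    obtain ⟨rfl, rfl⟩ : a = i ∧ b = j := Prod.mk.injEq .. ▸ h
    exact hb
  · intro h
    refine ⟨i, ?_, j, h, rfl⟩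
    by_contra hi
    have := hN i (by omega)
    omega

lemma cells_eq_coe {N : ℕ} (hN : ∀ i, N ≤ i → p.parts i = 0) :
    p.cells = ↑(cellsF p N) := by
  ext x; rw [Finset.mem_coe, mem_cellsF hN]

lemma cells_finite (p : Partition') : p.cells.Finite := by
  rw [cells_eq_coe (bnd_spec p)]; exact (cellsF p (bnd p)).finite_toSet

end P9
namespace P9
open Partition' Finset

variable {e : ℕ} {p q s : Partition'}

/-- `Ff e f x = ⌊(x - f)/e⌋`, so `Ff e f b - Ff e f a` counts residue-`f` integers in `(a,b]`. -/
def Ff (e : ℕ) (f : ZMod e) (x : ℤ) : ℤ := (x - f.val) / e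

lemma res_iff (he : 2 ≤ e) {d : ℤ} {f : ZMod e} :
    ((d : ZMod e) = f) ↔ (e : ℤ) ∣ (d - (f.val : ℤ)) := by
  haveI : NeZero e := ⟨by omega⟩
  constructor
  · intro h
    have h2 : ((f.val : ℤ) : ZMod e) = (d : ZMod e) := by
      push_cast; simp [ZMod.natCast_val, h]
    exact Int.ModEq.dvd ((ZMod.intCast_eq_intCast_iff _ _ _).mp h2)
  · intro h
    have h2 : ((f.val : ℤ) : ZMod e) = (d : ZMod e) :=
      (ZMod.intCast_eq_intCast_iff _ _ _).mpr (Int.modEq_iff_dvd.mpr h)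
    rw [← h2]; push_cast; simp [ZMod.natCast_val]

lemma Ff_mem (he : 2 ≤ e) {f : ZMod e} {x : ℤ} (h : (e:ℤ) ∣ x - f.val) :
    (f.val : ℤ) + e * Ff e f x = x := by
  obtain ⟨c, hc⟩ := h
  have h2 : Ff e f x = c := by
    unfold Ff; rw [hc]; exact Int.mul_ediv_cancel_left c (by omega)
  rw [h2]; linarith [hc]

lemma count_res_Ioc (he : 2 ≤ e) (f : ZMod e) {a b : ℤ} (hab : a ≤ b) :
    ((((Finset.Ioc a b).filter (fun d : ℤ => ((d : ZMod e) = f))).card : ℤ))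
      = Ff e f b - Ff e f a := by
  have he' : (0:ℤ) < e := by exact_mod_cast (by omega : 0 < e)
  have key : ((Finset.Ioc a b).filter (fun d : ℤ => ((d : ZMod e) = f)))
      = (Finset.Ioc (Ff e f a) (Ff e f b)).image (fun k => (f.val : ℤ) + e * k) := by
    ext d
    simp only [mem_filter, mem_Ioc, mem_image]
    constructor
    · rintro ⟨⟨ha, hb⟩, hres⟩
      have hmem := Ff_mem he ((res_iff he).mp hres)
      refine ⟨Ff e f d, ⟨?_, ?_⟩, hmem⟩
      · rw [show Ff e f a = (a - f.val) / e from rfl, Int.ediv_lt_iff_lt_mul he', mul_comm]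
        linarith [hmem]
      · exact Int.ediv_le_ediv he' (by omega)
    · rintro ⟨k, ⟨hk1, hk2⟩, rfl⟩
      have h1 : a < (f.val:ℤ) + e * k := by
        have := (Int.ediv_lt_iff_lt_mul he' (a := a - (f.val:ℤ)) (b := k)).mp hk1
        linarith [this]
      have h2 : (f.val:ℤ) + e * k ≤ b := by
        have := (Int.le_ediv_iff_mul_le he' (a := k) (b := b - (f.val:ℤ))).mpr
        have h3 : k * e ≤ b - f.val → k ≤ Ff e f b := fun hh =>
          (Int.le_ediv_iff_mul_le he').mpr hh
        by_contra hcon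
        push_neg at hcon
        have : ¬ (k ≤ Ff e f b) := by
          intro hle
          have := (Int.le_ediv_iff_mul_le he' (b := b - (f.val:ℤ))).mp hle
          linarith
        exact this hk2
      exact ⟨⟨h1, h2⟩, (res_iff he).mpr ⟨k, by ring⟩⟩
  have hinj : Function.Injective (fun k : ℤ => (f.val : ℤ) + e * k) := by
    intro x y h
    simp only at h
    have : (e:ℤ) * x = e * y := by linarith [h]
    exact mul_left_cancel₀ (by omega) this
  rw [key, Finset.card_image_of_injective _ hinj, Int.card_Ioc,
    Int.toNat_of_nonneg (by
      have := Int.ediv_le_ediv he' (by linarith [hab] : a - (f.val:ℤ) ≤ b - f.val)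
      unfold Ff; linarith)]

end P9
namespace P9
open Partition' Finset

variable {e : ℕ} {p q s : Partition'}

def resP (e : ℕ) (f : ZMod e) : ℕ × ℕ → Prop := fun x => (((x.2:ℤ) - x.1 : ℤ) : ZMod e) = f

instance (e : ℕ) (f : ZMod e) : DecidablePred (resP e f) := fun _ => Classical.dec _

lemma resCount_card {N : ℕ} (hN : ∀ i, N ≤ i → p.parts i = 0) (f : ZMod e) :
    resCount e 0 p f = ((cellsF p N).filter (resP e f)).card := by
  have hset : {x ∈ p.cells | (((x.2:ℤ) - x.1 + 0 : ℤ) : ZMod e) = f}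
      = ↑((cellsF p N).filter (resP e f)) := by
    ext x
    simp only [Set.mem_setOf_eq, Finset.coe_filter, mem_cellsF hN, resP, add_zero]
  rw [resCount, hset, Set.ncard_coe_finset]

lemma row_card (he : 2 ≤ e) (f : ZMod e) (i L : ℕ) :
    (((Finset.range L).filter (fun j => resP e f (i, j))).card : ℤ)
      = Ff e f ((L:ℤ) - i - 1) - Ff e f (-(i:ℤ) - 1) := by
  have key : (Finset.Ioc (-(i:ℤ) - 1) ((L:ℤ) - i - 1)).filter (fun d : ℤ => ((d : ZMod e) = f))
      = ((Finset.range L).filter (fun j => resP e f (i, j))).image (fun j : ℕ => (j:ℤ) - i) := by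
    ext d
    simp only [Finset.mem_filter, Finset.mem_Ioc, Finset.mem_image, Finset.mem_range]
    simp only [resP]
    constructor
    · rintro ⟨⟨h1, h2⟩, h3⟩
      refine ⟨(d + i).toNat, ⟨by omega, ?_⟩, by omega⟩
      have harg : (((d + i).toNat : ℕ) : ℤ) - (i:ℤ) = d := by omega
      rw [harg]
      exact h3
    · rintro ⟨j, ⟨hj, hres⟩, rfl⟩
      exact ⟨⟨by omega, by omega⟩, hres⟩
  have := count_res_Ioc he f (a := -(i:ℤ) - 1) (b := (L:ℤ) - i - 1) (by omega)
  rw [key, Finset.card_image_of_injective _ (fun x y h => by omega)] at this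
  exact this

lemma resCount_rows (he : 2 ≤ e) {N : ℕ} (hN : ∀ i, N ≤ i → p.parts i = 0) (f : ZMod e) :
    (resCount e 0 p f : ℤ)
      = ∑ i ∈ Finset.range N, (Ff e f (beta p i) - Ff e f (-(i:ℤ) - 1)) := by
  rw [resCount_card hN f, cellsF, Finset.filter_biUnion]
  rw [Finset.card_biUnion (by
    intro a ha b hb hab
    simp only [Finset.disjoint_left]
    intro x hx hx'
    simp only [mem_filter, mem_image] at hx hx'
    obtain ⟨⟨j, _, rfl⟩, _⟩ := hx
    obtain ⟨⟨j', _, h⟩, _⟩ := hx'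
    exact hab (congrArg Prod.fst h).symm)]
  push_cast
  refine Finset.sum_congr rfl (fun i _ => ?_)
  have himg : ((Finset.range (p.parts i)).image (fun j => (i, j))).filter (resP e f)
      = ((Finset.range (p.parts i)).filter (fun j => resP e f (i, j))).image (fun j => (i, j)) := by
    rw [Finset.filter_image]
  rw [himg, Finset.card_image_of_injective _ (fun x y h => (Prod.mk.injEq .. ▸ h).2)]
  rw [row_card he f i (p.parts i)]
  rw [show beta p i = (p.parts i : ℤ) - i - 1 from rfl]

lemma size_sum (he : 2 ≤ e) (p : Partition') :
    haveI : NeZero e := ⟨by omega⟩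
    (p.size : ℤ) = ∑ f : ZMod e, (resCount e 0 p f : ℤ) := by
  haveI : NeZero e := ⟨by omega⟩
  have h1 : p.size = (cellsF p (bnd p)).card := by
    rw [Partition'.size, cells_eq_coe (bnd_spec p), Set.ncard_coe_finset]
  have h2 : (cellsF p (bnd p)).card
      = ∑ f : ZMod e, ((cellsF p (bnd p)).filter (fun x => (((x.2:ℤ) - x.1 : ℤ) : ZMod e) = f)).card :=
    Finset.card_eq_sum_card_fiberwise (fun x _ => Finset.mem_univ _)
  rw [h1, h2]
  push_cast
  refine Finset.sum_congr rfl (fun f _ => ?_)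
  rw [resCount_card (bnd_spec p) f]
  norm_cast
  apply congrArg
  apply Finset.filter_congr
  intro x _
  simp [resP]

end P9
namespace P9
open Partition' Finset

variable {e : ℕ} {p q s : Partition'} {S : Set (ℕ × ℕ)} {x y z : ℕ × ℕ}

/-- Reachability inside a set of cells. -/
def Reach (S : Set (ℕ × ℕ)) (a b : ℕ × ℕ) : Prop :=
  ∃ (n : ℕ) (f : ℕ → ℕ × ℕ), f 0 = a ∧ f n = b ∧
    (∀ k < n, adjacent (f k) (f (k + 1))) ∧ (∀ k ≤ n, f k ∈ S)

lemma adjacent_symm {a b : ℕ × ℕ} (h : adjacent a b) : adjacent b a := by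
  rcases h with ⟨h1, h2⟩ | ⟨h1, h2⟩
  · exact Or.inl ⟨h1.symm, h2.symm⟩
  · exact Or.inr ⟨h1.symm, h2.symm⟩

lemma adjacent_fst {a b : ℕ × ℕ} (h : adjacent a b) : b.1 ≤ a.1 + 1 ∧ a.1 ≤ b.1 + 1 := by
  rcases h with ⟨h1, h2⟩ | ⟨h1, h2⟩ <;> omega

lemma adjacent_snd_eq {a b : ℕ × ℕ} (h : adjacent a b) (hne : a.1 ≠ b.1) : a.2 = b.2 := by
  rcases h with ⟨h1, h2⟩ | ⟨h1, h2⟩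
  · exact absurd h1 hne
  · exact h1

lemma Reach.refl (ha : x ∈ S) : Reach S x x :=
  ⟨0, fun _ => x, rfl, rfl, fun k hk => absurd hk (by omega), fun _ _ => ha⟩

lemma Reach.single (ha : x ∈ S) (hb : y ∈ S) (hadj : adjacent x y) : Reach S x y := by
  refine ⟨1, fun k => if k = 0 then x else y, by simp, by simp, ?_, ?_⟩
  · intro k hk
    have : k = 0 := by omega
    subst this; simpa using hadj
  · intro k _
    by_cases h : k = 0 <;> simp [h, ha, hb]

lemma Reach.symm (h : Reach S x y) : Reach S y x := by
  obtain ⟨n, f, h0, hn, hadj, hmem⟩ := h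
  refine ⟨n, fun k => f (n - k), by simpa, by simpa, ?_, ?_⟩
  · intro k hk
    show adjacent (f (n - k)) (f (n - (k+1)))
    have h1 : n - k = (n - (k+1)) + 1 := by omega
    rw [h1]
    exact adjacent_symm (hadj (n - (k+1)) (by omega))
  · intro k _
    exact hmem _ (by omega)

lemma Reach.trans (h1 : Reach S x y) (h2 : Reach S y z) : Reach S x z := by
  obtain ⟨n, f, hf0, hfn, hfadj, hfmem⟩ := h1
  obtain ⟨m, g, hg0, hgm, hgadj, hgmem⟩ := h2
  refine ⟨n + m, fun k => if k ≤ n then f k else g (k - n), by simp [hf0], ?_, ?_, ?_⟩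
  · by_cases h : m = 0
    · subst h; simpa [hfn, ← hg0]
    · simp only [if_neg (by omega : ¬ n + m ≤ n)]
      rw [show n + m - n = m by omega, hgm]
  · intro k hk
    by_cases h : k + 1 ≤ n
    · simp only [if_pos (by omega : k ≤ n), if_pos h]
      exact hfadj k (by omega)
    · by_cases h' : k ≤ n
      · have : k = n := by omega
        subst this
        simp only [if_pos le_rfl, if_neg h]
        rw [show k + 1 - k = 1 by omega, hfn, ← hg0]
        exact hgadj 0 (by omega)
      · simp only [if_neg h', if_neg h]
        rw [show k + 1 - n = (k - n) + 1 by omega]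
        exact hgadj (k - n) (by omega)
  · intro k hk
    by_cases h : k ≤ n
    · simp only [if_pos h]; exact hfmem k h
    · simp only [if_neg h]; exact hgmem (k - n) (by omega)

/-- Discrete IVT: a ℕ-valued path with unit steps takes every intermediate value,
and crosses every level. -/
lemma exists_cross (g : ℕ → ℕ) (n : ℕ) (hstep : ∀ k < n, g (k+1) ≤ g k + 1) (a : ℕ)
    (h0 : g 0 ≤ a) (hn : a < g n) : ∃ k < n, g k = a ∧ g (k+1) = a + 1 := by
  have hex : ∃ m, a < g m := ⟨n, hn⟩
  classical
  set m := Nat.find hex with hm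
  have hPm : a < g m := Nat.find_spec hex
  have hmn : m ≤ n := Nat.find_le hn
  have hm0 : m ≠ 0 := by
    intro h; rw [h] at hPm; omega
  have hprev : ¬ a < g (m - 1) := Nat.find_min hex (by omega)
  have hstep' : g m ≤ g (m - 1) + 1 := by
    have := hstep (m - 1) (by omega)
    rwa [show m - 1 + 1 = m by omega] at this
  refine ⟨m - 1, by omega, by omega, ?_⟩
  rw [show m - 1 + 1 = m by omega]; omega

lemma exists_value (g : ℕ → ℕ) (n : ℕ) (hstep : ∀ k < n, g (k+1) ≤ g k + 1) (a : ℕ)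
    (h0 : g 0 ≤ a) (hn : a ≤ g n) : ∃ k ≤ n, g k = a := by
  rcases eq_or_lt_of_le hn with h | h
  · exact ⟨n, le_rfl, h.symm⟩
  · obtain ⟨k, hk, hka, _⟩ := exists_cross g n hstep a h0 h
    exact ⟨k, by omega, hka⟩

end P9
namespace P9
open Partition' Finset

variable {e : ℕ} {p q s : Partition'}

lemma mem_cells {x : ℕ × ℕ} : x ∈ p.cells ↔ x.2 < p.parts x.1 := Iff.rfl

lemma parts_le_of_subset (h : s.cells ⊆ q.cells) (a : ℕ) : s.parts a ≤ q.parts a := by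
  by_contra hc
  push_neg at hc
  have h1 : ((a, q.parts a) : ℕ × ℕ) ∈ s.cells := by
    show q.parts a < s.parts a; exact hc
  have h2 : q.parts a < q.parts a := h h1
  omega

def diffF (s q : Partition') : Finset (ℕ × ℕ) :=
  (cellsF q (bnd q)).filter (fun x => ¬ x.2 < s.parts x.1)

lemma mem_diffF {x : ℕ × ℕ} : x ∈ diffF s q ↔ s.parts x.1 ≤ x.2 ∧ x.2 < q.parts x.1 := by
  rw [diffF, mem_filter, mem_cellsF (bnd_spec q), mem_cells]
  omega

lemma diff_coe (s q : Partition') : q.cells \ s.cells = ↑(diffF s q) := by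
  ext x
  rw [Set.mem_diff, Finset.mem_coe, mem_diffF, mem_cells, mem_cells]
  omega

lemma hook_structure (he : 2 ≤ e) (h : Partition'.AddRimHook s q e) :
    ∃ i l : ℕ, i ≤ l ∧
      (∀ a, a < i ∨ l < a → s.parts a = q.parts a) ∧
      (∀ a, i ≤ a → a < l → s.parts a + 1 = q.parts (a + 1)) ∧
      ((s.parts l : ℤ) = (q.parts i : ℤ) + l - i - e) := by
  obtain ⟨hsub, hcard, hconn, h2x2⟩ := h
  have hple := parts_le_of_subset hsub
  have hdiff := diff_coe s q
  have hcard' : (diffF s q).card = e := by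
    rw [hdiff, Set.ncard_coe_finset] at hcard; exact hcard
  have hne : (diffF s q).Nonempty := by rw [← Finset.card_pos, hcard']; omega
  set R := (diffF s q).image Prod.fst with hR
  have hRne : R.Nonempty := hne.image _
  set i := R.min' hRne with hi
  set l := R.max' hRne with hl
  have hil : i ≤ l := R.min'_le _ (R.max'_mem hRne)
  have hocc : ∀ a, a ∈ R ↔ s.parts a < q.parts a := by
    intro a
    constructor
    · intro ha
      obtain ⟨x, hx, rfl⟩ := Finset.mem_image.mp ha
      have := mem_diffF.mp hx
      omega
    · intro ha
      exact Finset.mem_image.mpr ⟨(a, s.parts a), mem_diffF.mpr ⟨le_rfl, ha⟩, rfl⟩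
  have hmemD : ∀ x, x ∈ diffF s q → x ∈ q.cells \ s.cells := by
    intro x hx; rw [hdiff]; exact hx
  -- every row between i and l is occupied
  have hint : ∀ a, i ≤ a → a ≤ l → s.parts a < q.parts a := by
    intro a hia hal
    obtain ⟨x, hx, hxi⟩ := Finset.mem_image.mp (R.min'_mem hRne)
    obtain ⟨y, hy, hyl⟩ := Finset.mem_image.mp (R.max'_mem hRne)
    obtain ⟨n, f, hf0, hfn, hfadj, hfmem⟩ := hconn x (hmemD x hx) y (hmemD y hy)
    obtain ⟨k, hkn, hka⟩ := exists_value (fun k => (f k).1) n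
      (fun k hk => (adjacent_fst (hfadj k hk)).1) a
      (by show (f 0).1 ≤ a; rw [hf0, hxi]; exact hia)
      (by show a ≤ (f n).1; rw [hfn, hyl]; exact hal)
    have hfk := hfmem k hkn
    rw [hdiff, Finset.mem_coe] at hfk
    rw [← hocc]
    exact hka ▸ Finset.mem_image.mpr ⟨f k, hfk, rfl⟩
  have houtside : ∀ a, a < i ∨ l < a → s.parts a = q.parts a := by
    intro a ha
    have : a ∉ R := by
      intro hmem
      rcases ha with ha | ha
      · exact absurd (R.min'_le a hmem) (by omega)
      · exact absurd (R.le_max' a hmem) (by omega)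
    rw [hocc] at this
    have := hple a
    omega
  have hconsec : ∀ a, i ≤ a → a < l → s.parts a + 1 = q.parts (a + 1) := by
    intro a hia hal
    have hle1 : q.parts (a+1) ≤ s.parts a + 1 := by
      by_contra hgt
      push_neg at hgt
      have c1 : ((a, s.parts a) : ℕ × ℕ) ∈ q.cells \ s.cells := by
        rw [Set.mem_diff, mem_cells, mem_cells]
        have := hint a hia (by omega); simp only; omega
      have c2 : ((a+1, s.parts a) : ℕ × ℕ) ∈ q.cells \ s.cells := by
        rw [Set.mem_diff, mem_cells, mem_cells]
        have := s.antitone (show a ≤ a + 1 by omega); simp only; omega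
      have c3 : ((a, s.parts a + 1) : ℕ × ℕ) ∈ q.cells \ s.cells := by
        rw [Set.mem_diff, mem_cells, mem_cells]
        have := q.antitone (show a ≤ a + 1 by omega); simp only; omega
      have c4 : ((a+1, s.parts a + 1) : ℕ × ℕ) ∈ q.cells \ s.cells := by
        rw [Set.mem_diff, mem_cells, mem_cells]
        have h1 := s.antitone (show a ≤ a + 1 by omega); simp only; omega
      exact h2x2 a (s.parts a) ⟨c1, c2, c3, c4⟩
    have hle2 : s.parts a < q.parts (a+1) := by
      have hx : ((a, s.parts a) : ℕ × ℕ) ∈ diffF s q :=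
        mem_diffF.mpr ⟨le_rfl, hint a hia (by omega)⟩
      have hy : ((a+1, s.parts (a+1)) : ℕ × ℕ) ∈ diffF s q :=
        mem_diffF.mpr ⟨le_rfl, hint (a+1) (by omega) (by omega)⟩
      obtain ⟨n, f, hf0, hfn, hfadj, hfmem⟩ :=
        hconn _ (hmemD _ hx) _ (hmemD _ hy)
      obtain ⟨k, hkn, hka, hka'⟩ := exists_cross (fun k => (f k).1) n
        (fun k hk => (adjacent_fst (hfadj k hk)).1) a
        (by show (f 0).1 ≤ a; rw [hf0]) (by show a < (f n).1; rw [hfn]; simp)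
      have hsnd : (f k).2 = (f (k+1)).2 :=
        adjacent_snd_eq (hfadj k hkn) (by omega)
      have hm1 := hfmem k (by omega)
      have hm2 := hfmem (k+1) (by omega)
      rw [hdiff, Finset.mem_coe, mem_diffF] at hm1 hm2
      rw [hka] at hm1
      rw [hka'] at hm2
      omega
    omega
  -- cardinality: row decomposition
  have hD2 : diffF s q = (Finset.Icc i l).biUnion
      (fun a => (Finset.Ico (s.parts a) (q.parts a)).image (fun c => (a, c))) := by
    ext ⟨a, c⟩
    simp only [mem_diffF, Finset.mem_biUnion, Finset.mem_Icc, Finset.mem_image, Finset.mem_Ico]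
    constructor
    · rintro ⟨h1, h2⟩
      have haR : a ∈ R := Finset.mem_image.mpr ⟨(a, c), mem_diffF.mpr ⟨h1, h2⟩, rfl⟩
      exact ⟨a, ⟨R.min'_le a haR, R.le_max' a haR⟩, c, ⟨h1, h2⟩, rfl⟩
    · rintro ⟨a', _, c', ⟨h1, h2⟩, heq⟩
      obtain ⟨rfl, rfl⟩ : a' = a ∧ c' = c := Prod.mk.injEq .. ▸ heq
      exact ⟨h1, h2⟩
  have hcards : ∑ a ∈ Finset.Icc i l, (q.parts a - s.parts a) = e := by
    rw [hD2] at hcard'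
    rw [Finset.card_biUnion (by
      intro a _ b _ hab
      simp only [Finset.disjoint_left]
      rintro ⟨a', c'⟩ h1 h2
      simp only [Finset.mem_image] at h1 h2
      obtain ⟨_, _, heq1⟩ := h1
      obtain ⟨_, _, heq2⟩ := h2
      have := (Prod.mk.injEq .. ▸ heq1).1
      have := (Prod.mk.injEq .. ▸ heq2).1
      exact hab (by omega))] at hcard'
    rw [← hcard']
    refine Finset.sum_congr rfl (fun a _ => ?_)
    rw [Finset.card_image_of_injective _ (fun x y hxy => (Prod.mk.injEq .. ▸ hxy).2),
      Nat.card_Ico]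
  -- telescoping
  have hcast : ∑ a ∈ Finset.Icc i l, ((q.parts a : ℤ) - s.parts a) = e := by
    rw [show ∑ a ∈ Finset.Icc i l, ((q.parts a : ℤ) - s.parts a)
        = ∑ a ∈ Finset.Icc i l, ((q.parts a - s.parts a : ℕ) : ℤ) from
      Finset.sum_congr rfl (fun a _ => by
        have := hple a; push_cast [Nat.cast_sub this]; ring)]
    rw [← Nat.cast_sum, hcards]
  rw [← Finset.Ico_add_one_right_eq_Icc, Finset.sum_Ico_succ_top (by omega)] at hcast
  have htel : ∑ a ∈ Finset.Ico i l, ((q.parts a : ℤ) - s.parts a)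
      = (q.parts i : ℤ) - q.parts l + (l - i) := by
    have hterm : ∀ a ∈ Finset.Ico i l, ((q.parts a : ℤ) - s.parts a)
        = ((q.parts a : ℤ) - q.parts (a+1)) + 1 := by
      intro a ha
      rw [Finset.mem_Ico] at ha
      have := hconsec a ha.1 ha.2
      push_cast [← this]
      ring
    rw [Finset.sum_congr rfl hterm, Finset.sum_add_distrib, Finset.sum_const, Nat.card_Ico]
    rw [Finset.sum_Ico_eq_sum_range]
    have := Finset.sum_range_sub' (fun t => (q.parts (i + t) : ℤ)) (l - i)
    rw [show ∑ t ∈ Finset.range (l - i), ((q.parts (i + t) : ℤ) - q.parts (i + t + 1))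
        = ∑ t ∈ Finset.range (l - i), ((q.parts (i + t) : ℤ) - q.parts (i + (t + 1))) from
      Finset.sum_congr rfl (fun t _ => by rw [show i + t + 1 = i + (t+1) by omega]), this]
    rw [show i + (l - i) = l by omega]
    simp only [nsmul_eq_mul, mul_one, Nat.add_zero]
    rw [Nat.cast_sub hil]
  refine ⟨i, l, hil, houtside, hconsec, ?_⟩
  rw [htel] at hcast
  have : ((l : ℤ) - i) = ((l - i : ℕ) : ℤ) := by push_cast [Nat.cast_sub hil]; ring
  omega

end P9
namespace P9
open Partition' Finset

variable {e : ℕ} {p q s : Partition'}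

lemma sum_beta_shift (G : ℤ → ℤ) {i l N : ℕ} (hil : i ≤ l) (hlN : l < N)
    (bs bq : ℕ → ℤ) (v : ℤ)
    (hout : ∀ a, a < i ∨ l < a → bs a = bq a)
    (hmid : ∀ a, i ≤ a → a < l → bs a = bq (a+1))
    (hlast : bs l = v) :
    ∑ a ∈ Finset.range N, G (bs a)
      = ∑ a ∈ Finset.range N, G (bq a) - G (bq i) + G v := by
  have split : ∀ c : ℕ → ℤ, ∑ a ∈ Finset.range N, c a
      = ∑ a ∈ Finset.Ico 0 i, c a + ∑ a ∈ Finset.Ico i (l+1), c a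
        + ∑ a ∈ Finset.Ico (l+1) N, c a := by
    intro c
    rw [Finset.range_eq_Ico,
      ← Finset.sum_Ico_consecutive _ (by omega : (0:ℕ) ≤ l+1) (by omega : l+1 ≤ N),
      ← Finset.sum_Ico_consecutive _ (by omega : (0:ℕ) ≤ i) (by omega : i ≤ l+1)]
  rw [split (fun a => G (bs a)), split (fun a => G (bq a))]
  have h1 : ∑ a ∈ Finset.Ico 0 i, G (bs a) = ∑ a ∈ Finset.Ico 0 i, G (bq a) :=
    Finset.sum_congr rfl (fun a ha => by rw [hout a (Or.inl (Finset.mem_Ico.mp ha).2)])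
  have h3 : ∑ a ∈ Finset.Ico (l+1) N, G (bs a) = ∑ a ∈ Finset.Ico (l+1) N, G (bq a) :=
    Finset.sum_congr rfl (fun a ha =>
      by rw [hout a (Or.inr (by have := (Finset.mem_Ico.mp ha).1; omega))])
  have h2s : ∑ a ∈ Finset.Ico i (l+1), G (bs a)
      = ∑ a ∈ Finset.Ico i l, G (bq (a+1)) + G v := by
    rw [Finset.sum_Ico_succ_top (by omega), hlast]
    congr 1
    exact Finset.sum_congr rfl (fun a ha => by
      have := Finset.mem_Ico.mp ha; rw [hmid a this.1 this.2])
  have h2q : ∑ a ∈ Finset.Ico i (l+1), G (bq a)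
      = G (bq i) + ∑ a ∈ Finset.Ico i l, G (bq (a+1)) := by
    rw [Finset.sum_eq_sum_Ico_succ_bot (by omega : i < l + 1)]
    congr 1
    rw [Finset.sum_Ico_eq_sum_range, Finset.sum_Ico_eq_sum_range]
    rw [show l + 1 - (i + 1) = l - i by omega]
    exact Finset.sum_congr rfl (fun t _ => by rw [show i + 1 + t = i + t + 1 by omega])
  rw [h1, h3, h2s, h2q]
  ring

lemma Ff_sub_e (he : 2 ≤ e) (f : ZMod e) (x : ℤ) : Ff e f (x - e) = Ff e f x - 1 := by
  unfold Ff
  rw [show x - e - f.val = (x - f.val) + (-1) * e by ring,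
    Int.add_mul_ediv_right _ _ (by omega : (e:ℤ) ≠ 0)]
  ring

lemma resCount_step (he : 2 ≤ e) (h : Partition'.AddRimHook s q e) (f : ZMod e) :
    resCount e 0 q f = resCount e 0 s f + 1 := by
  obtain ⟨i, l, hil, hout, hmid, hlast⟩ := hook_structure he h
  set N := max (bnd s) (max (bnd q) (l+1)) with hN
  have hNs : ∀ a, N ≤ a → s.parts a = 0 := fun a ha => bnd_spec s a (by omega)
  have hNq : ∀ a, N ≤ a → q.parts a = 0 := fun a ha => bnd_spec q a (by omega)
  have hq := resCount_rows (p := q) he hNq f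
  have hs := resCount_rows (p := s) he hNs f
  have hbout : ∀ a, a < i ∨ l < a → beta s a = beta q a := fun a ha => by
    unfold beta; rw [hout a ha]
  have hbmid : ∀ a, i ≤ a → a < l → beta s a = beta q (a+1) := by
    intro a h1 h2
    have h3 := hmid a h1 h2
    unfold beta; push_cast [← h3]; ring
  have hblast : beta s l = beta q i - e := by
    unfold beta; rw [hlast]; ring
  have key := sum_beta_shift (Ff e f) hil (by omega : l < N)
    (beta s) (beta q) (beta q i - e) hbout hbmid hblast
  have hFf := Ff_sub_e he f (beta q i)
  have hsub : ∀ b : ℕ → ℤ, ∑ a ∈ Finset.range N, (Ff e f (b a) - Ff e f (-(a:ℤ) - 1))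
      = ∑ a ∈ Finset.range N, Ff e f (b a) - ∑ a ∈ Finset.range N, Ff e f (-(a:ℤ) - 1) :=
    fun b => Finset.sum_sub_distrib _ _
  rw [hsub] at hq hs
  have : (resCount e 0 q f : ℤ) = (resCount e 0 s f : ℤ) + 1 := by
    rw [hq, hs, key, hFf]; ring
  omega

end P9
namespace P9
open Partition' Finset

variable {e : ℕ} {p q s : Partition'}

lemma reach_row {S : Set (ℕ × ℕ)} {a u v : ℕ} (h : ∀ c, u ≤ c → c < v → ((a, c) : ℕ × ℕ) ∈ S) :
    ∀ (d c : ℕ), u ≤ c → c + d < v → Reach S (a, c) (a, c + d) := by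
  intro d
  induction d with
  | zero => intro c h1 h2; exact Reach.refl (h c h1 (by omega))
  | succ d ih =>
    intro c h1 h2
    have r1 : Reach S (a, c) (a, c+1) :=
      Reach.single (h c h1 (by omega)) (h (c+1) (by omega) (by omega))
        (Or.inl ⟨rfl, Or.inl rfl⟩)
    have r2 := ih (c+1) (by omega) (by omega)
    rw [show c + 1 + d = c + (d+1) by omega] at r2
    exact r1.trans r2

lemma exists_removal (he : 2 ≤ e) (p : Partition') (i₀ : ℕ)
    (hnc : ∀ i', beta p i' ≠ beta p i₀ - e) :
    ∃ s, Partition'.AddRimHook s p e := by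
  have hanti := (beta_strictAnti p).antitone
  have hE : (2:ℤ) ≤ (e:ℤ) := by exact_mod_cast he
  have hex : ∃ a, beta p a < beta p i₀ - e := by
    refine ⟨max (bnd p) (i₀ + e + 1), ?_⟩
    rw [beta_bnd (le_max_left _ _)]
    have h1 := beta_ge p i₀
    have h2 : (i₀ + e + 1 : ℕ) ≤ max (bnd p) (i₀ + e + 1) := le_max_right _ _
    have h3 : ((i₀ + e + 1 : ℕ) : ℤ) ≤ ((max (bnd p) (i₀ + e + 1) : ℕ) : ℤ) := by
      exact_mod_cast h2
    push_cast at h3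
    omega
  classical
  set a₀ := Nat.find hex with ha₀
  have hPa₀ : beta p a₀ < beta p i₀ - e := Nat.find_spec hex
  have hi₀a₀ : i₀ < a₀ := by
    by_contra hcon
    push_neg at hcon
    have := hanti hcon
    omega
  set l := a₀ - 1 with hldef
  have hi₀l : i₀ ≤ l := by omega
  have hbl : beta p i₀ - e < beta p l := by
    have h1 : ¬ beta p l < beta p i₀ - e := Nat.find_min hex (by omega)
    have h2 := hnc l
    omega
  have hbl1 : beta p (l+1) < beta p i₀ - e := by
    rw [show l + 1 = a₀ by omega]; exact hPa₀
  have hβl1 := beta_ge p (l+1)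
  have hβge := beta_ge p l
  have hpl : 1 ≤ p.parts l := by
    have h1 : -(l:ℤ) ≤ beta p l := by push_cast at hβl1 ⊢; omega
    unfold beta at h1
    omega
  have hsl_nonneg : (e:ℤ) ≤ (p.parts i₀ : ℤ) + ((l:ℤ) - i₀) := by
    have h1 : beta p (l+1) + 1 ≤ beta p i₀ - e := by omega
    unfold beta at h1
    push_cast at h1
    omega
  -- the new partition
  set σ : ℕ → ℕ := fun a =>
    if a < i₀ then p.parts a else if a < l then p.parts (a+1) - 1
    else if a = l then p.parts i₀ + (l - i₀) - e else p.parts a with hσ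
  have hσout : ∀ a, a < i₀ ∨ l < a → σ a = p.parts a := by
    intro a ha
    rcases ha with ha | ha
    · simp [hσ, ha]
    · have h1 : ¬ a < i₀ := by omega
      have h2 : ¬ a < l := by omega
      have h3 : ¬ a = l := by omega
      simp [hσ, h1, h2, h3]
  have hσmid : ∀ a, i₀ ≤ a → a < l → σ a + 1 = p.parts (a+1) := by
    intro a h1 h2
    have h3 : ¬ a < i₀ := by omega
    have h4 : 1 ≤ p.parts (a+1) := le_trans hpl (p.antitone (by omega))
    simp only [hσ, if_neg h3, if_pos h2]
    omega
  have hσl : (σ l : ℤ) = (p.parts i₀ : ℤ) + ((l:ℤ) - i₀) - e := by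
    have h3 : ¬ l < i₀ := by omega
    have h4 : ¬ l < l := by omega
    simp only [hσ, if_neg h3, if_neg h4, if_pos rfl]
    have h5 : ((i₀:ℤ)) ≤ (l:ℤ) := by exact_mod_cast hi₀l
    push_cast
    omega
  have hσl_lt : σ l < p.parts l := by
    have h1 := hbl
    unfold beta at h1
    omega
  have hσl_ge : (p.parts (l+1) : ℤ) ≤ (σ l : ℤ) := by
    have h1 := hbl1
    unfold beta at h1
    push_cast at h1
    omega
  have hσle : ∀ a, σ a ≤ p.parts a := by
    intro a
    rcases lt_or_ge a i₀ with h | h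
    · rw [hσout a (Or.inl h)]
    · rcases lt_or_ge a l with h2 | h2
      · have := hσmid a h h2
        have := p.antitone (show a ≤ a + 1 by omega)
        omega
      · rcases eq_or_lt_of_le h2 with h3 | h3
        · rw [← h3]; omega
        · rw [hσout a (Or.inr h3)]
  have hσanti : ∀ a, σ (a+1) ≤ σ a := by
    intro a
    rcases lt_or_ge (a+1) i₀ with h | h
    · rw [hσout a (Or.inl (by omega)), hσout (a+1) (Or.inl h)]
      exact p.antitone (by omega)
    · rcases lt_or_ge a l with h2 | h2
      · rcases lt_or_ge a i₀ with h3 | h3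
        · -- a + 1 = i₀
          have hai : a + 1 = i₀ := by omega
          rw [hσout a (Or.inl h3)]
          have := hσle (a+1)
          have := p.antitone (show a ≤ a + 1 by omega)
          omega
        · rcases lt_or_ge (a+1) l with h4 | h4
          · have e1 := hσmid a h3 (by omega)
            have e2 := hσmid (a+1) (by omega) h4
            have := p.antitone (show a+1 ≤ a+1+1 by omega)
            omega
          · -- a+1 = l or a+1 > l with a < l ⇒ a+1 = l
            have hal : a + 1 = l := by omega
            have e1 := hσmid a h3 (by omega)
            have hv : σ (a+1) = σ l := by rw [hal]
            have hp : p.parts (a+1) = p.parts l := by rw [hal]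
            omega
      · rcases eq_or_lt_of_le h2 with h3 | h3
        · -- a = l
          rw [hσout (a+1) (Or.inr (by omega))]
          have hv : σ a = σ l := by rw [h3]
          have : (p.parts (a+1) : ℤ) ≤ (σ l : ℤ) := by rw [← h3]; exact hσl_ge
          omega
        · rw [hσout a (Or.inr h3), hσout (a+1) (Or.inr (by omega))]
          exact p.antitone (by omega)
  set s : Partition' := ⟨σ, fun i j hij => antitone_nat_of_succ_le hσanti hij,
    ⟨max (bnd p) (l+1), fun a ha => by
      rw [hσout a (Or.inr (by omega))]; exact bnd_spec p a (by omega)⟩⟩ with hs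
  have hsparts : ∀ a, s.parts a = σ a := fun a => rfl
  have hDmem : ∀ a c, ((a, c) : ℕ × ℕ) ∈ p.cells \ s.cells ↔ (σ a ≤ c ∧ c < p.parts a) := by
    intro a c
    rw [Set.mem_diff]
    show (c < p.parts a ∧ ¬ c < σ a) ↔ _
    omega
  have hrow_ne : ∀ a, i₀ ≤ a → a ≤ l → σ a < p.parts a := by
    intro a h1 h2
    rcases lt_or_ge a l with h3 | h3
    · have := hσmid a h1 h3
      have := p.antitone (show a ≤ a + 1 by omega)
      omega
    · have : a = l := by omega
      rw [this]; exact hσl_lt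
  have hrow : ∀ a c, ((a, c) : ℕ × ℕ) ∈ p.cells \ s.cells
      ↔ (i₀ ≤ a ∧ a ≤ l ∧ σ a ≤ c ∧ c < p.parts a) := by
    intro a c
    rw [hDmem]
    constructor
    · rintro ⟨h1, h2⟩
      refine ⟨?_, ?_, h1, h2⟩ <;>
      · by_contra hcon
        push_neg at hcon
        have := hσout a (by omega)
        omega
    · rintro ⟨_, _, h1, h2⟩; exact ⟨h1, h2⟩
  -- subset
  have hsub : s.cells ⊆ p.cells := by
    intro x hx
    rw [mem_cells] at hx ⊢
    exact lt_of_lt_of_le (by rw [hsparts] at hx; exact hx) (hσle x.1)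
  -- cardinality
  have hDfin : diffF s p = (Finset.Icc i₀ l).biUnion
      (fun a => (Finset.Ico (σ a) (p.parts a)).image (fun c => (a, c))) := by
    ext ⟨a, c⟩
    rw [mem_diffF]
    simp only [Finset.mem_biUnion, Finset.mem_Icc, Finset.mem_image, Finset.mem_Ico, hsparts]
    constructor
    · rintro ⟨h1, h2⟩
      have := (hrow a c).mp ((hDmem a c).mpr ⟨h1, h2⟩)
      exact ⟨a, ⟨this.1, this.2.1⟩, c, ⟨h1, h2⟩, rfl⟩
    · rintro ⟨a', _, c', ⟨h1, h2⟩, heq⟩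
      obtain ⟨rfl, rfl⟩ : a' = a ∧ c' = c := Prod.mk.injEq .. ▸ heq
      exact ⟨h1, h2⟩
  have hcard : (p.cells \ s.cells).ncard = e := by
    rw [diff_coe s p, Set.ncard_coe_finset, hDfin]
    rw [Finset.card_biUnion (by
      intro a _ b _ hab
      simp only [Finset.disjoint_left]
      rintro ⟨a', c'⟩ h1 h2
      simp only [Finset.mem_image] at h1 h2
      obtain ⟨_, _, heq1⟩ := h1
      obtain ⟨_, _, heq2⟩ := h2
      have := (Prod.mk.injEq .. ▸ heq1).1
      have := (Prod.mk.injEq .. ▸ heq2).1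
      exact hab (by omega))]
    have hterm : ∀ a ∈ Finset.Icc i₀ l,
        ((Finset.Ico (σ a) (p.parts a)).image (fun c => (a, c))).card
        = p.parts a - σ a := by
      intro a _
      rw [Finset.card_image_of_injective _ (fun x y hxy => (Prod.mk.injEq .. ▸ hxy).2),
        Nat.card_Ico]
    rw [Finset.sum_congr rfl hterm]
    -- cast to ℤ and telescope
    have htel : ∑ a ∈ Finset.Icc i₀ l, ((p.parts a : ℤ) - σ a) = e := by
      rw [← Finset.Ico_add_one_right_eq_Icc, Finset.sum_Ico_succ_top (by omega)]
      have hterm2 : ∀ a ∈ Finset.Ico i₀ l, ((p.parts a : ℤ) - σ a)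
          = ((p.parts a : ℤ) - p.parts (a+1)) + 1 := by
        intro a ha
        rw [Finset.mem_Ico] at ha
        have := hσmid a ha.1 ha.2
        push_cast [← this]
        ring
      rw [Finset.sum_congr rfl hterm2, Finset.sum_add_distrib, Finset.sum_const, Nat.card_Ico]
      rw [Finset.sum_Ico_eq_sum_range]
      have hts := Finset.sum_range_sub' (fun t => (p.parts (i₀ + t) : ℤ)) (l - i₀)
      rw [show ∑ t ∈ Finset.range (l - i₀), ((p.parts (i₀ + t) : ℤ) - p.parts (i₀ + t + 1))
          = ∑ t ∈ Finset.range (l - i₀), ((p.parts (i₀ + t) : ℤ) - p.parts (i₀ + (t + 1))) from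
        Finset.sum_congr rfl (fun t _ => by rw [show i₀ + t + 1 = i₀ + (t+1) by omega]), hts]
      rw [show i₀ + (l - i₀) = l by omega]
      simp only [nsmul_eq_mul, mul_one, Nat.add_zero]
      rw [Nat.cast_sub hi₀l]
      omega
    have hZ : ((∑ a ∈ Finset.Icc i₀ l, (p.parts a - σ a) : ℕ) : ℤ) = (e:ℤ) := by
      rw [Nat.cast_sum,
        Finset.sum_congr rfl (fun a _ =>
          (Nat.cast_sub (hσle a) :
            ((p.parts a - σ a : ℕ):ℤ) = (p.parts a:ℤ) - σ a))]
      exact htel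
    exact_mod_cast hZ
  -- connectivity
  have hreach : ∀ a, i₀ ≤ a → a ≤ l → ∀ c, σ a ≤ c → c < p.parts a →
      Reach (p.cells \ s.cells) (a, c) (i₀, p.parts i₀ - 1) := by
    intro a
    induction a using Nat.strong_induction_on with
    | _ a IH =>
      intro h1 h2 c h3 h4
      have hrowmem : ∀ b, i₀ ≤ b → b ≤ l → ∀ c', σ b ≤ c' → c' < p.parts b →
          ((b, c') : ℕ × ℕ) ∈ p.cells \ s.cells := by
        intro b hb1 hb2 c' hc1 hc2
        exact (hrow b c').mpr ⟨hb1, hb2, hc1, hc2⟩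
      rcases eq_or_lt_of_le h1 with heq | hlt
      · -- a = i₀ : horizontal
        rw [heq]
        have hd : p.parts a - 1 = c + (p.parts a - 1 - c) := by omega
        rw [hd]
        exact reach_row (fun c' hc1 hc2 => hrowmem a h1 h2 c' hc1 hc2)
          (p.parts a - 1 - c) c h3 (by omega)
      · -- a > i₀
        have hb : i₀ ≤ a - 1 := by omega
        have hbl' : a - 1 < l := by omega
        have hmid := hσmid (a-1) hb hbl'
        rw [show a - 1 + 1 = a by omega] at hmid
        -- σ (a-1) = p.parts a - 1
        have r1 : Reach (p.cells \ s.cells) (a, c) (a, p.parts a - 1) := by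
          have hd : p.parts a - 1 = c + (p.parts a - 1 - c) := by omega
          rw [hd]
          exact reach_row (fun c' hc1 hc2 => hrowmem a h1 h2 c' hc1 hc2)
            (p.parts a - 1 - c) c h3 (by omega)
        have hm1 : ((a, p.parts a - 1) : ℕ × ℕ) ∈ p.cells \ s.cells :=
          hrowmem a h1 h2 _ (by omega) (by omega)
        have hm2 : ((a - 1, p.parts a - 1) : ℕ × ℕ) ∈ p.cells \ s.cells := by
          apply hrowmem (a-1) hb (by omega)
          · omega
          · have := p.antitone (show a - 1 ≤ a by omega)
            omega
        have r2 : Reach (p.cells \ s.cells) (a, p.parts a - 1) (a - 1, p.parts a - 1) :=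
          Reach.single hm1 hm2 (Or.inr ⟨rfl, Or.inr (by simp only; omega)⟩)
        have r3 := IH (a-1) (by omega) hb (by omega) (p.parts a - 1) (by omega)
          (by have := p.antitone (show a - 1 ≤ a by omega); omega)
        exact (r1.trans r2).trans r3
  have hconn : ConnectedSet (p.cells \ s.cells) := by
    intro x hx y hy
    obtain ⟨a, c⟩ := x
    obtain ⟨b, d⟩ := y
    rw [hrow] at hx hy
    exact (hreach a hx.1 hx.2.1 c hx.2.2.1 hx.2.2.2).trans
      (hreach b hy.1 hy.2.1 d hy.2.2.1 hy.2.2.2).symm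
  -- no 2x2
  have h2x2 : No2x2 (p.cells \ s.cells) := by
    intro a c ⟨h1, h2, h3, h4⟩
    rw [hrow] at h1 h2 h4
    have hal : a < l := by omega
    have := hσmid a (by omega) hal
    omega
  exact ⟨s, hsub, hcard, hconn, h2x2⟩

end P9
namespace P9
open Partition' Finset

variable {e : ℕ} {p q s : Partition'}

lemma ext' (h : p.parts = q.parts) : p = q := by
  cases p; cases q; simp only at h; subst h; rfl

lemma strictAnti_range_eq {σ τ : ℕ → ℤ} (hσ : StrictAnti σ) (hτ : StrictAnti τ)
    (h : Set.range σ = Set.range τ) : σ = τ := by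
  funext i
  induction i using Nat.strong_induction_on with
  | _ i IH =>
    have h1 : σ i ≤ τ i := by
      obtain ⟨k, hk⟩ : σ i ∈ Set.range τ := h ▸ Set.mem_range_self i
      rcases lt_or_ge k i with hki | hki
      · exfalso
        have := IH k hki
        have : σ k = σ i := by rw [this, hk]
        have := hσ.injective this
        omega
      · calc σ i = τ k := hk.symm
          _ ≤ τ i := hτ.antitone hki
    have h2 : τ i ≤ σ i := by
      obtain ⟨k, hk⟩ : τ i ∈ Set.range σ := h.symm ▸ Set.mem_range_self i
      rcases lt_or_ge k i with hki | hki
      · exfalso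
        have h3 := IH k hki
        have h4 : τ k = τ i := by rw [← h3, hk]
        have := hτ.injective h4
        omega
      · calc τ i = σ k := hk.symm
          _ ≤ σ i := hσ.antitone hki
    omega

lemma closed_iter (hcl : ∀ i, ∃ i', beta p i' = beta p i - e) :
    ∀ (k : ℕ) (i : ℕ), ∃ i', beta p i' = beta p i - e * k := by
  intro k
  induction k with
  | zero => intro i; exact ⟨i, by push_cast; ring⟩
  | succ k ih =>
    intro i
    obtain ⟨j, hj⟩ := ih i
    obtain ⟨j', hj'⟩ := hcl j
    exact ⟨j', by rw [hj', hj]; push_cast; ring⟩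

lemma beta_mem_low (p : Partition') {x : ℤ} (hx : x ≤ -(bnd p : ℤ) - 1) :
    ∃ i, beta p i = x := by
  refine ⟨(-x-1).toNat, ?_⟩
  have h2 : bnd p ≤ (-x-1).toNat := by omega
  rw [beta_bnd h2]
  omega

lemma runner (he : 2 ≤ e) (p : Partition') (hcl : ∀ i, ∃ i', beta p i' = beta p i - e)
    (r : ℕ) :
    ∃ m : ℤ, (e:ℤ) ∣ m - r ∧
      (∀ i, (e:ℤ) ∣ beta p i - r → beta p i ≤ m) ∧
      (∀ x : ℤ, (e:ℤ) ∣ x - r → x ≤ m → ∃ i, beta p i = x) ∧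
      -(bnd p : ℤ) - e ≤ m := by
  have hE : (0:ℤ) < e := by exact_mod_cast (by omega : 0 < e)
  have hanti := (beta_strictAnti p).antitone
  -- an element of the runner
  set y : ℤ := -(bnd p : ℤ) - 1 - r with hy
  set d : ℤ := y / e with hd
  have hmod1 : (e:ℤ) * d + y % e = y := by rw [hd]; exact Int.mul_ediv_add_emod y e
  have hmod2 : 0 ≤ y % e := Int.emod_nonneg y (by omega)
  have hmod3 : y % e < e := Int.emod_lt_of_pos y hE
  set x0 : ℤ := (r:ℤ) + e * d with hx0
  have hx0le : x0 ≤ -(bnd p : ℤ) - 1 := by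
    have : (e:ℤ) * d ≤ y := by omega
    omega
  have hx0low : -(bnd p : ℤ) - e ≤ x0 := by
    have : y < (e:ℤ) * d + e := by omega
    omega
  obtain ⟨i0, hi0⟩ := beta_mem_low p hx0le
  have hex : ∃ i, (e:ℤ) ∣ beta p i - r := ⟨i0, ⟨d, by rw [hi0]; omega⟩⟩
  classical
  set i1 := Nat.find hex with hi1
  set m := beta p i1 with hm
  have hdvd : (e:ℤ) ∣ m - r := Nat.find_spec hex
  have hmax : ∀ i, (e:ℤ) ∣ beta p i - r → beta p i ≤ m := by
    intro i hi
    exact hanti (Nat.find_min' hex hi)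
  refine ⟨m, hdvd, hmax, ?_, ?_⟩
  · intro x hxd hxm
    have hdvd2 : (e:ℤ) ∣ m - x := by
      have := dvd_sub hdvd hxd
      rwa [show m - (r:ℤ) - (x - r) = m - x by ring] at this
    set k' : ℤ := (m - x) / e with hk'
    have hk'e : (e:ℤ) * k' = m - x := Int.mul_ediv_cancel' hdvd2
    have hk'nn : 0 ≤ k' := Int.ediv_nonneg (by omega) (by omega)
    obtain ⟨i', hi'⟩ := closed_iter hcl k'.toNat i1
    refine ⟨i', ?_⟩
    rw [hi']
    have : ((k'.toNat : ℕ) : ℤ) = k' := Int.toNat_of_nonneg hk'nn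
    rw [this]
    omega
  · calc -(bnd p : ℤ) - e ≤ x0 := hx0low
      _ ≤ m := by rw [← hi0]; exact hmax i0 ⟨d, by rw [hi0]; omega⟩

lemma Ff_runner (he : 2 ≤ e) (f : ZMod e) (r : ℕ) (hr : r < e) (k : ℤ) :
    Ff e f ((r:ℤ) + e * k) = k + (if (f.val:ℤ) ≤ r then 0 else -1) := by
  haveI : NeZero e := ⟨by omega⟩
  have hfv : f.val < e := ZMod.val_lt f
  unfold Ff
  rw [show (r:ℤ) + e * k - f.val = ((r:ℤ) - f.val) + k * e by ring,
    Int.add_mul_ediv_right _ _ (by omega : (e:ℤ) ≠ 0)]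
  by_cases h : (f.val:ℤ) ≤ r
  · rw [if_pos h, Int.ediv_eq_zero_of_lt (by omega) (by push_cast; omega)]
    ring
  · rw [if_neg h]
    have h1 : ((r:ℤ) - f.val) = (((r:ℤ) - f.val + e) + (-1) * e) := by ring
    rw [h1, Int.add_mul_ediv_right _ _ (by omega : (e:ℤ) ≠ 0),
      Int.ediv_eq_zero_of_lt (by push_cast; omega) (by push_cast; omega)]
    ring

end P9
namespace P9
open Partition' Finset

variable {e : ℕ} {p q s : Partition'}

lemma core_expand (he : 2 ≤ e) (P : Partition') (m : ℕ → ℤ) (K : ℕ)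
    (hmdvd : ∀ r : ℕ, (e:ℤ) ∣ m r - r)
    (hmax : ∀ r : ℕ, ∀ i, (e:ℤ) ∣ beta P i - (r:ℤ) → beta P i ≤ m r)
    (hdown : ∀ r : ℕ, ∀ x : ℤ, (e:ℤ) ∣ x - (r:ℤ) → x ≤ m r → ∃ i, beta P i = x)
    (hmlow : ∀ r : ℕ, -(bnd P : ℤ) - e ≤ m r)
    (hK : bnd P + 2*e ≤ K * e) :
    (∀ f : ZMod e, ∑ i ∈ Finset.range (K*e), Ff e f (beta P i)
       = (∑ r ∈ Finset.range e, ∑ k ∈ Finset.Icc (-(K:ℤ)) ((m r - (r:ℤ))/e), k)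
         + ∑ r ∈ Finset.range e,
             ((m r - (r:ℤ))/e + K + 1) * (if (f.val:ℤ) ≤ (r:ℤ) then 0 else -1))
    ∧ ((K*e : ℕ) : ℤ) = ∑ r ∈ Finset.range e, ((m r - (r:ℤ))/e + K + 1) := by
  have hE : (0:ℤ) < e := by exact_mod_cast (by omega : 0 < e)
  have hbinj : Function.Injective (beta P) := (beta_strictAnti P).injective
  have hKe : ((K*e : ℕ) : ℤ) = (K:ℤ) * e := by push_cast; ring
  have hTe : ∀ r : ℕ, (e:ℤ) * ((m r - r)/e) = m r - r := fun r => Int.mul_ediv_cancel' (hmdvd r)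
  have hTlow : ∀ r : ℕ, r < e → -(K:ℤ) ≤ (m r - (r:ℤ))/e := by
    intro r hr
    have h1 : -(K:ℤ) * e ≤ m r - r := by
      have h2 := hmlow r
      have h3 : ((bnd P + 2*e : ℕ) : ℤ) ≤ ((K * e : ℕ) : ℤ) := by exact_mod_cast hK
      push_cast at h3
      have h4 : (r:ℤ) < e := by exact_mod_cast hr
      rw [neg_mul]
      omega
    have := Int.ediv_le_ediv hE h1
    rwa [Int.mul_ediv_cancel _ (by omega : (e:ℤ) ≠ 0)] at this
  have hbndK : bnd P ≤ K * e := by omega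
  -- the image identity
  have himg : (Finset.range (K*e)).image (beta P) = (Finset.range e).biUnion (fun r =>
      (Finset.Icc (-(K:ℤ)) ((m r - (r:ℤ))/e)).image (fun k => (r:ℤ) + e * k)) := by
    ext x
    simp only [Finset.mem_image, Finset.mem_biUnion, Finset.mem_range, Finset.mem_Icc]
    constructor
    · rintro ⟨i, hi, rfl⟩
      set b := beta P i with hb
      have hm1 : (e:ℤ) * (b / e) + b % e = b := Int.mul_ediv_add_emod b e
      have hm2 : 0 ≤ b % e := Int.emod_nonneg b (by omega)
      have hm3 : b % e < e := Int.emod_lt_of_pos b hE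
      set r : ℕ := (b % e).toNat with hrdef
      have hrcast : (r:ℤ) = b % e := Int.toNat_of_nonneg hm2
      have hre : r < e := by omega
      have hdvd : (e:ℤ) ∣ b - r := ⟨b / e, by omega⟩
      set k : ℤ := (b - r)/e with hk
      have hke : (e:ℤ) * k = b - r := Int.mul_ediv_cancel' hdvd
      have hbm : b ≤ m r := hmax r i hdvd
      have hkub : k ≤ (m r - (r:ℤ))/e := by
        rw [hk]; exact Int.ediv_le_ediv hE (by omega)
      have hblow : -((K*e:ℕ):ℤ) ≤ b := by
        have := beta_ge P i
        have : ((i:ℕ):ℤ) < ((K*e:ℕ):ℤ) := by exact_mod_cast hi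
        unfold beta at *
        omega
      have hklb : -(K:ℤ) ≤ k := by
        by_contra hcon
        push_neg at hcon
        have h4 : k ≤ -(K:ℤ) - 1 := by omega
        have h5 : (e:ℤ) * k ≤ e * (-(K:ℤ) - 1) := by
          exact mul_le_mul_of_nonneg_left h4 (by omega)
        rw [hKe] at hblow
        nlinarith
      exact ⟨r, hre, k, ⟨hklb, hkub⟩, by omega⟩
    · rintro ⟨r, hr, k, ⟨h1, h2⟩, rfl⟩
      have hxm : (r:ℤ) + e * k ≤ m r := by
        have h3 : (e:ℤ) * k ≤ e * ((m r - r)/e) := mul_le_mul_of_nonneg_left h2 (by omega)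
        rw [hTe r] at h3
        omega
      obtain ⟨i, hi⟩ := hdown r ((r:ℤ) + e * k) ⟨k, by ring⟩ hxm
      refine ⟨i, ?_, hi⟩
      by_contra hcon
      push_neg at hcon
      have h4 : beta P i = -(i:ℤ) - 1 := beta_bnd (by omega)
      have h5 : (e:ℤ) * (-(K:ℤ)) ≤ e * k := mul_le_mul_of_nonneg_left h1 (by omega)
      have h6 : ((K*e:ℕ):ℤ) ≤ (i:ℤ) := by exact_mod_cast hcon
      rw [hKe] at h6
      nlinarith [hi, h4]
  have hdisj : ∀ r1 ∈ Finset.range e, ∀ r2 ∈ Finset.range e, r1 ≠ r2 →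
      Disjoint ((Finset.Icc (-(K:ℤ)) ((m r1 - (r1:ℤ))/e)).image (fun k => (r1:ℤ) + e * k))
        ((Finset.Icc (-(K:ℤ)) ((m r2 - (r2:ℤ))/e)).image (fun k => (r2:ℤ) + e * k)) := by
    intro r1 hr1 r2 hr2 hne
    rw [Finset.mem_range] at hr1 hr2
    simp only [Finset.disjoint_left]
    rintro x hx1 hx2
    simp only [Finset.mem_image] at hx1 hx2
    obtain ⟨k1, _, hk1⟩ := hx1
    obtain ⟨k2, _, hk2⟩ := hx2
    have hdd : (e:ℤ) ∣ (r1:ℤ) - r2 := ⟨k2 - k1, by linarith [hk1, hk2]⟩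
    have : ((r1:ℤ) - r2) = 0 := Int.eq_zero_of_abs_lt_dvd hdd (by
      rw [abs_lt]; constructor <;> [skip; skip] <;> push_cast <;> omega)
    exact hne (by omega)
  have hinj2 : ∀ r : ℕ, Function.Injective (fun k : ℤ => (r:ℤ) + e * k) := by
    intro r x y hxy
    simp only at hxy
    have : (e:ℤ) * x = e * y := by linarith
    exact mul_left_cancel₀ (by omega) this
  have hcardIcc : ∀ r : ℕ, r < e →
      ((Finset.Icc (-(K:ℤ)) ((m r - (r:ℤ))/e)).card : ℤ) = (m r - (r:ℤ))/e + K + 1 := by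
    intro r hr
    rw [Int.card_Icc, Int.toNat_of_nonneg (by have := hTlow r hr; omega)]
    ring
  constructor
  · intro f
    rw [← Finset.sum_image (g := beta P) (f := Ff e f)
      (fun x _ y _ h => hbinj h)]
    rw [himg, Finset.sum_biUnion (fun r1 hr1 r2 hr2 hne => hdisj r1 hr1 r2 hr2 hne)]
    rw [show ∑ r ∈ Finset.range e, ∑ x ∈ (Finset.Icc (-(K:ℤ)) ((m r - (r:ℤ))/e)).image
          (fun k => (r:ℤ) + e * k), Ff e f x
        = ∑ r ∈ Finset.range e, ∑ k ∈ Finset.Icc (-(K:ℤ)) ((m r - (r:ℤ))/e),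
            (k + (if (f.val:ℤ) ≤ (r:ℤ) then 0 else -1)) from
      Finset.sum_congr rfl (fun r hr => by
        rw [Finset.sum_image (g := fun k : ℤ => (r:ℤ) + e * k) (f := Ff e f)
          (fun x _ y _ h => hinj2 r h)]
        exact Finset.sum_congr rfl (fun k _ =>
          Ff_runner he f r (Finset.mem_range.mp hr) k))]
    rw [← Finset.sum_add_distrib]
    refine Finset.sum_congr rfl (fun r hr => ?_)
    rw [Finset.sum_add_distrib, Finset.sum_const, nsmul_eq_mul]
    congr 1
    rw [hcardIcc r (Finset.mem_range.mp hr)]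
  · have hcard1 : ((Finset.range (K*e)).image (beta P)).card = K*e := by
      rw [Finset.card_image_of_injective _ hbinj, Finset.card_range]
    rw [himg] at hcard1
    rw [Finset.card_biUnion hdisj] at hcard1
    have : ((K*e : ℕ):ℤ) = ((∑ r ∈ Finset.range e,
        ((Finset.Icc (-(K:ℤ)) ((m r - (r:ℤ))/e)).image (fun k => (r:ℤ) + e * k)).card : ℕ) : ℤ) := by
      exact_mod_cast hcard1.symm
    rw [this, Nat.cast_sum]
    refine Finset.sum_congr rfl (fun r hr => ?_)
    rw [Finset.card_image_of_injective _ (hinj2 r)]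
    exact hcardIcc r (Finset.mem_range.mp hr)

end P9
namespace P9
open Partition' Finset

variable {e : ℕ} {p q s : Partition'}

lemma core_unique (he : 2 ≤ e) (p q : Partition')
    (hp : ∀ i, ∃ i', beta p i' = beta p i - e) (hq : ∀ i, ∃ i', beta q i' = beta q i - e)
    (d : ℤ) (hC : ∀ f : ZMod e, (resCount e 0 p f : ℤ) = (resCount e 0 q f : ℤ) + d) :
    p = q := by
  haveI : NeZero e := ⟨by omega⟩
  have hE : (0:ℤ) < e := by exact_mod_cast (by omega : 0 < e)
  choose mp hp1 hp2 hp3 hp4 using runner he p hp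
  choose mq hq1 hq2 hq3 hq4 using runner he q hq
  set K := bnd p + bnd q + 2*e + 2 with hKdef
  have hmul : K * 2 ≤ K * e := Nat.mul_le_mul_left K he
  have hKp : bnd p + 2*e ≤ K * e := by omega
  have hKq : bnd q + 2*e ≤ K * e := by omega
  obtain ⟨hexpP, hchP⟩ := core_expand he p mp K hp1 hp2 hp3 hp4 hKp
  obtain ⟨hexpQ, hchQ⟩ := core_expand he q mq K hq1 hq2 hq3 hq4 hKq
  have hrowP := fun f => resCount_rows (p := p) (N := K*e) he
    (fun i hi => bnd_spec p i (by omega)) f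
  have hrowQ := fun f => resCount_rows (p := q) (N := K*e) he
    (fun i hi => bnd_spec q i (by omega)) f
  have hkey : ∀ f : ZMod e,
      (∑ r ∈ Finset.range e, ∑ k ∈ Finset.Icc (-(K:ℤ)) ((mp r - (r:ℤ))/e), k)
        + ∑ r ∈ Finset.range e,
            ((mp r - (r:ℤ))/e + K + 1) * (if (f.val:ℤ) ≤ (r:ℤ) then 0 else -1)
      = (∑ r ∈ Finset.range e, ∑ k ∈ Finset.Icc (-(K:ℤ)) ((mq r - (r:ℤ))/e), k)
        + ∑ r ∈ Finset.range e,
            ((mq r - (r:ℤ))/e + K + 1) * (if (f.val:ℤ) ≤ (r:ℤ) then 0 else -1)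
        + d := by
    intro f
    have h1 := hC f
    rw [hrowP f, hrowQ f, Finset.sum_sub_distrib, Finset.sum_sub_distrib,
      hexpP f, hexpQ f] at h1
    linarith [h1]
  set u : ℕ → ℤ := fun r => (mp r - (r:ℤ))/e - (mq r - (r:ℤ))/e with hu
  have hF0 : ∀ f' : ℕ, f' < e → ∑ r ∈ Finset.range f', u r = 0 := by
    intro f' hf'
    have hv : ((f' : ZMod e)).val = f' := ZMod.val_natCast_of_lt hf'
    have hv0 : ((0 : ZMod e)).val = 0 := ZMod.val_zero
    have h1 := hkey (f' : ZMod e)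
    have h0 := hkey (0 : ZMod e)
    rw [hv] at h1
    rw [hv0] at h0
    have hz : ∀ (mm : ℕ → ℤ), ∑ r ∈ Finset.range e,
        ((mm r - (r:ℤ))/e + K + 1) * (if (((0:ℕ)):ℤ) ≤ (r:ℤ) then 0 else -1) = 0 := by
      intro mm
      refine Finset.sum_eq_zero (fun r _ => ?_)
      rw [if_pos (by omega : (((0:ℕ)):ℤ) ≤ (r:ℤ))]
      ring
    rw [hz mp, hz mq] at h0
    have hdiff : ∑ r ∈ Finset.range e,
          ((mp r - (r:ℤ))/e + K + 1) * (if ((f':ℕ):ℤ) ≤ (r:ℤ) then 0 else -1)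
        - ∑ r ∈ Finset.range e,
          ((mq r - (r:ℤ))/e + K + 1) * (if ((f':ℕ):ℤ) ≤ (r:ℤ) then 0 else -1)
        = ∑ r ∈ Finset.range e, u r * (if ((f':ℕ):ℤ) ≤ (r:ℤ) then 0 else -1) := by
      rw [← Finset.sum_sub_distrib]
      exact Finset.sum_congr rfl (fun r _ => by rw [hu]; ring)
    have hsplit : ∑ r ∈ Finset.range e, u r * (if ((f':ℕ):ℤ) ≤ (r:ℤ) then 0 else -1)
        = - ∑ r ∈ Finset.range f', u r := by
      rw [Finset.range_eq_Ico,
        ← Finset.sum_Ico_consecutive (fun r => u r * (if ((f':ℕ):ℤ) ≤ (r:ℤ) then 0 else -1))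
          (Nat.zero_le f') (le_of_lt hf')]
      have ha : ∑ r ∈ Finset.Ico 0 f', u r * (if ((f':ℕ):ℤ) ≤ (r:ℤ) then 0 else -1)
          = ∑ r ∈ Finset.Ico 0 f', -(u r) :=
        Finset.sum_congr rfl (fun r hr => by
          have h := (Finset.mem_Ico.mp hr).2
          rw [if_neg (show ¬ ((f':ℕ):ℤ) ≤ (r:ℤ) by omega)]
          ring)
      have hb : ∑ r ∈ Finset.Ico f' e, u r * (if ((f':ℕ):ℤ) ≤ (r:ℤ) then 0 else -1) = 0 :=
        Finset.sum_eq_zero (fun r hr => by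
          have h := (Finset.mem_Ico.mp hr).1
          rw [if_pos (show ((f':ℕ):ℤ) ≤ (r:ℤ) by omega)]
          ring)
      rw [ha, hb, add_zero, Finset.sum_neg_distrib, ← Finset.range_eq_Ico]
    linarith [h1, h0, hdiff, hsplit]
  have hcharge : ∑ r ∈ Finset.range e, u r = 0 := by
    have h2 : ∑ r ∈ Finset.range e, u r
        = ∑ r ∈ Finset.range e, (((mp r - (r:ℤ))/e + K + 1) - ((mq r - (r:ℤ))/e + K + 1)) :=
      Finset.sum_congr rfl (fun r _ => by rw [hu]; ring)
    rw [h2, Finset.sum_sub_distrib, ← hchP, ← hchQ]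
    ring
  have huz : ∀ r, r < e → u r = 0 := by
    intro r hr
    have h1 : ∑ x ∈ Finset.range r, u x = 0 := hF0 r hr
    have h2 : ∑ x ∈ Finset.range (r+1), u x = 0 := by
      rcases eq_or_lt_of_le (show r+1 ≤ e by omega) with h | h
      · rw [h]; exact hcharge
      · exact hF0 (r+1) h
    rw [Finset.sum_range_succ, h1] at h2
    linarith
  have hmeq : ∀ r : ℕ, r < e → mp r = mq r := by
    intro r hr
    have h1 := Int.mul_ediv_cancel' (hp1 r)
    have h2 := Int.mul_ediv_cancel' (hq1 r)
    have h3 := huz r hr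
    rw [hu] at h3
    simp only at h3
    have h4 : (mp r - (r:ℤ))/e = (mq r - (r:ℤ))/e := by linarith
    rw [h4] at h1
    linarith
  have hrange : Set.range (beta p) = Set.range (beta q) := by
    have haux : ∀ (P Q : Partition') (mP mQ : ℕ → ℤ)
        (_ : ∀ r : ℕ, ∀ i, (e:ℤ) ∣ beta P i - (r:ℤ) → beta P i ≤ mP r)
        (_ : ∀ r : ℕ, ∀ x : ℤ, (e:ℤ) ∣ x - (r:ℤ) → x ≤ mQ r → ∃ i, beta Q i = x)
        (_ : ∀ r : ℕ, r < e → mP r = mQ r),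
        Set.range (beta P) ⊆ Set.range (beta Q) := by
      intro P Q mP mQ hPmax hQdown hPQ x hx
      obtain ⟨i, rfl⟩ := hx
      set b := beta P i with hb
      have hm1 : (e:ℤ) * (b / e) + b % e = b := Int.mul_ediv_add_emod b e
      have hm2 : 0 ≤ b % e := Int.emod_nonneg b (by omega)
      have hm3 : b % e < e := Int.emod_lt_of_pos b hE
      set r : ℕ := (b % e).toNat with hrdef
      have hrcast : (r:ℤ) = b % e := Int.toNat_of_nonneg hm2
      have hre : r < e := by omega
      have hdvd : (e:ℤ) ∣ b - r := ⟨b / e, by omega⟩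
      have hbm : b ≤ mP r := hPmax r i hdvd
      rw [hPQ r hre] at hbm
      obtain ⟨j, hj⟩ := hQdown r b hdvd hbm
      exact ⟨j, hj⟩
    apply Set.Subset.antisymm
    · exact haux p q mp mq hp2 hq3 hmeq
    · exact haux q p mq mp hq2 hp3 (fun r hr => (hmeq r hr).symm)
  have hbeta : beta p = beta q :=
    strictAnti_range_eq (beta_strictAnti p) (beta_strictAnti q) hrange
  apply ext'
  funext i
  have h5 := congrFun hbeta i
  unfold beta at h5
  omega

end P9
namespace P9
open Partition' Finset

variable {e : ℕ} {p q s : Partition'}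

lemma size_drop (he : 2 ≤ e) (h : Partition'.AddRimHook s q e) : s.size + e = q.size := by
  obtain ⟨hsub, hcard, _, _⟩ := h
  have hfin : q.cells.Finite := cells_finite q
  have h1 : (q.cells \ s.cells).ncard = q.cells.ncard - s.cells.ncard :=
    Set.ncard_diff hsub (hfin.subset hsub)
  have h2 : s.cells.ncard ≤ q.cells.ncard := Set.ncard_le_ncard hsub hfin
  have h3 : e ≤ q.cells.ncard := by
    rw [← hcard]
    exact Set.ncard_le_ncard (Set.diff_subset) hfin
  unfold Partition'.size
  omega

lemma to_core (he : 2 ≤ e) : ∀ (n : ℕ) (p : Partition'), p.size = n →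
    ∃ c, Relation.ReflTransGen (fun a b => Partition'.AddRimHook b a e) p c ∧
      ¬ ∃ s, Partition'.AddRimHook s c e := by
  intro n
  induction n using Nat.strong_induction_on with
  | _ n IH =>
    intro p hn
    by_cases hex : ∃ s, Partition'.AddRimHook s p e
    · obtain ⟨s, hs⟩ := hex
      have hs' := size_drop he hs
      obtain ⟨c, hc1, hc2⟩ := IH s.size (by omega) s rfl
      exact ⟨c, Relation.ReflTransGen.head hs hc1, hc2⟩
    · exact ⟨p, Relation.ReflTransGen.refl, hex⟩

lemma chain_resCount (he : 2 ≤ e) {p c : Partition'}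
    (h : Relation.ReflTransGen (fun a b => Partition'.AddRimHook b a e) p c) :
    ∃ k : ℕ, ∀ f : ZMod e, resCount e 0 p f = resCount e 0 c f + k := by
  induction h with
  | refl => exact ⟨0, fun f => rfl⟩
  | tail hab hbc IH =>
    obtain ⟨k, hk⟩ := IH
    refine ⟨k + 1, fun f => ?_⟩
    have := resCount_step he hbc f
    have := hk f
    omega

lemma core_closed (he : 2 ≤ e) {c : Partition'} (h : ¬ ∃ s, Partition'.AddRimHook s c e) :
    ∀ i, ∃ i', beta c i' = beta c i - e := by
  intro i
  by_contra hcon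
  push_neg at hcon
  exact h (exists_removal he c i hcon)

end P9

open P9 in
theorem stmt9' (e n : ℕ) (he : 2 ≤ e) (p q : Partition')
    (hp : p.size = n) (hq : q.size = n) :
    (∃ c : Partition', Relation.ReflTransGen (fun a b => Partition'.AddRimHook b a e) p c ∧
        Relation.ReflTransGen (fun a b => Partition'.AddRimHook b a e) q c ∧
        ¬ ∃ s, Partition'.AddRimHook s c e)
      ↔ ∀ f : ZMod e, Partition'.resCount e 0 p f = Partition'.resCount e 0 q f := by
  haveI : NeZero e := ⟨by omega⟩
  have hcarde : (Finset.univ : Finset (ZMod e)).card = e := by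
    rw [Finset.card_univ, ZMod.card]
  have hsum : ∀ (a b : Partition') (k : ℕ),
      (∀ f : ZMod e, Partition'.resCount e 0 a f = Partition'.resCount e 0 b f + k) →
      (a.size : ℤ) = (b.size : ℤ) + (e : ℤ) * k := by
    intro a b k hk
    rw [size_sum he a, size_sum he b]
    have h1 : ∀ f : ZMod e, (Partition'.resCount e 0 a f : ℤ)
        = (Partition'.resCount e 0 b f : ℤ) + (k:ℤ) := by
      intro f; exact_mod_cast hk f
    rw [Finset.sum_congr rfl (fun f _ => h1 f), Finset.sum_add_distrib, Finset.sum_const,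
      hcarde, nsmul_eq_mul]
  constructor
  · rintro ⟨c, hpc, hqc, _⟩ f
    obtain ⟨kp, hkp⟩ := chain_resCount he hpc
    obtain ⟨kq, hkq⟩ := chain_resCount he hqc
    have h1 := hsum p c kp hkp
    have h2 := hsum q c kq hkq
    have h3 : (e:ℤ) * kp = (e:ℤ) * kq := by omega
    have h4 : (kp : ℤ) = (kq : ℤ) := mul_left_cancel₀ (by exact_mod_cast (by omega : e ≠ 0)) h3
    have h5 : kp = kq := by exact_mod_cast h4
    rw [hkp f, hkq f, h5]
  · intro hC
    obtain ⟨cp, hpc, hcp⟩ := to_core he p.size p rfl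
    obtain ⟨cq, hqc, hcq⟩ := to_core he q.size q rfl
    obtain ⟨kp, hkp⟩ := chain_resCount he hpc
    obtain ⟨kq, hkq⟩ := chain_resCount he hqc
    have hclp := core_closed he hcp
    have hclq := core_closed he hcq
    have heq : cp = cq := by
      apply core_unique he cp cq hclp hclq ((kq:ℤ) - kp)
      intro f
      have h1 := hkp f
      have h2 := hkq f
      have h3 := hC f
      push_cast
      omega
    exact ⟨cp, hpc, heq ▸ hqc, hcp⟩


/-- Two partitions of `n` have the same `e`-core if and only if they have the same number
of nodes of each residue mod `e`. -/
theorem stmt9 (e n : ℕ) (he : 2 ≤ e) (p q : Partition')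
    (hp : p.size = n) (hq : q.size = n) :
    (∃ c : Partition', Relation.ReflTransGen (fun a b => Partition'.AddRimHook b a e) p c ∧
        Relation.ReflTransGen (fun a b => Partition'.AddRimHook b a e) q c ∧
        ¬ ∃ s, Partition'.AddRimHook s c e)
      ↔ ∀ f : ZMod e, Partition'.resCount e 0 p f = Partition'.resCount e 0 q f :=
  stmt9' e n he p q hp hq
end
end
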